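/- If 2k < n ≤ 3k, then for any (n,k)-generator G and each i ∈ {1,2,3}, the number of members of G of size at least i is at least constr^i(n,k); in particular |G| ≥ constr(n,k). -/

import Mathlib

variable {α : Type*} [DecidableEq α]

/-- degree of a point: number of members of the family containing it -/
def dA (A : Finset (Finset α)) (z : α) : ℕ := (A.filter (fun a => z ∈ a)).card

/-- a set of points is closed if every member meeting it is contained in it -/
def IsClosed' (A : Finset (Finset α)) (C : Finset α) : Prop :=
  ∀ a ∈ A, (a ∩ C).Nonempty → a ⊆ C

/-- connected component of a point: intersection of all closed subsets of X containing z -/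
noncomputable def conn (X : Finset α) (A : Finset (Finset α)) (z : α) : Finset α :=
  @Finset.filter _ (fun w => ∀ C ⊆ X, z ∈ C → IsClosed' A C → w ∈ C)
    (Classical.decPred _) X

lemma mem_conn {X : Finset α} {A : Finset (Finset α)} {z w : α} :
    w ∈ conn X A z ↔ w ∈ X ∧ ∀ C ⊆ X, z ∈ C → IsClosed' A C → w ∈ C := by
  unfold conn; exact @Finset.mem_filter _ _ (Classical.decPred _) _ _

lemma conn_subset (X : Finset α) (A : Finset (Finset α)) (z : α) : conn X A z ⊆ X := by
  intro w hw; exact (mem_conn.1 hw).1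

lemma mem_conn_self {X : Finset α} (A : Finset (Finset α)) {z : α} (hz : z ∈ X) :
    z ∈ conn X A z := mem_conn.2 ⟨hz, fun C _ hzC _ => hzC⟩

lemma conn_min {X : Finset α} {A : Finset (Finset α)} {z : α} {C : Finset α}
    (hC : C ⊆ X) (hzC : z ∈ C) (hcl : IsClosed' A C) : conn X A z ⊆ C := by
  intro w hw
  exact (mem_conn.1 hw).2 C hC hzC hcl

lemma conn_closed {X : Finset α} {A : Finset (Finset α)} {z : α}
    (hA : ∀ a ∈ A, a ⊆ X) : IsClosed' A (conn X A z) := by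
  intro a ha hne
  obtain ⟨p, hp⟩ := hne
  simp only [Finset.mem_inter] at hp
  intro q hq
  have hp2 := mem_conn.1 hp.2
  refine mem_conn.2 ⟨hA a ha hq, fun C hC hzC hcl => ?_⟩
  have hpC : p ∈ C := hp2.2 C hC hzC hcl
  exact hcl a ha ⟨p, Finset.mem_inter.2 ⟨hp.1, hpC⟩⟩ hq

/-- the component condition (h4) -/
def CompCond (X : Finset α) (A : Finset (Finset α)) (G : Finset α) : Prop :=
  ∀ z ∈ X, (G ∩ conn X A z).Nonempty ∨ (∃ a ∈ A, a ⊆ conn X A z ∧ 3 ≤ a.card) ∨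
    Even (conn X A z).card

/-- Transfer lemma for deletion-style surgeries -/
lemma transfer1 {X X' : Finset α} {A : Finset (Finset α)} {G G' : Finset α}
    (hX' : X' ⊆ X)
    (hA : ∀ a ∈ A, a ⊆ X)
    (hstub : ∀ s ∈ A, ¬ s ⊆ X' → (s ∩ X') ⊆ G')
    (hGG' : G ∩ X' ⊆ G')
    (h4 : CompCond X A G) :
    CompCond X' (A.filter (fun a => a ⊆ X')) G' := by
  intro w hw
  set A' := A.filter (fun a => a ⊆ X') with hA'
  by_cases hcase : (G' ∩ conn X' A' w).Nonempty
  · exact Or.inl hcase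
  have hdisj : ∀ g ∈ G', g ∉ conn X' A' w := by
    intro g hg hgc
    exact hcase ⟨g, Finset.mem_inter.2 ⟨hg, hgc⟩⟩
  have hA'sub : ∀ a ∈ A', a ⊆ X' := fun a ha => (Finset.mem_filter.1 ha).2
  -- conn X' A' w is closed in (X, A)
  have hclosedX : IsClosed' A (conn X' A' w) := by
    intro s hs hmeet
    by_cases hsub : s ⊆ X'
    · exact conn_closed hA'sub s (Finset.mem_filter.2 ⟨hs, hsub⟩) hmeet
    · exfalso
      obtain ⟨p, hp⟩ := hmeet
      rw [Finset.mem_inter] at hp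
      have hpX' : p ∈ X' := conn_subset _ _ _ hp.2
      exact hdisj p (hstub s hs hsub (Finset.mem_inter.2 ⟨hp.1, hpX'⟩)) hp.2
  have hwX : w ∈ X := hX' hw
  have h1 : conn X A w ⊆ conn X' A' w :=
    conn_min ((conn_subset X' A' w).trans hX') (mem_conn_self _ hw) hclosedX
  have h2 : conn X' A' w ⊆ conn X A w := by
    refine conn_min (h1.trans (conn_subset X' A' w)) (mem_conn_self _ hwX) ?_
    intro s hs hmeet
    exact conn_closed hA s (Finset.mem_filter.1 hs).1 hmeet
  have heq : conn X' A' w = conn X A w := le_antisymm h2 h1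
  rcases h4 w hwX with hGc | hbig | heven
  · exfalso
    obtain ⟨g, hg⟩ := hGc
    rw [Finset.mem_inter] at hg
    have hgX' : g ∈ X' := (heq ▸ hg.2 : g ∈ conn X A w) |> fun h => by
      exact conn_subset X' A' w (heq ▸ h)
    exact hdisj g (hGG' (Finset.mem_inter.2 ⟨hg.1, hgX'⟩)) (heq ▸ hg.2)
  · obtain ⟨a, ha, hsub, hcard⟩ := hbig
    refine Or.inr (Or.inl ⟨a, ?_, heq ▸ hsub, hcard⟩)
    exact Finset.mem_filter.2 ⟨ha, (heq ▸ hsub).trans (conn_subset X' A' w)⟩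
  · exact Or.inr (Or.inr (heq ▸ heven))

/-- the two members through a degree-2 point -/
lemma sets_of_point {A : Finset (Finset α)} {z : α} (h : dA A z = 2) :
    ∃ a b, a ≠ b ∧ a ∈ A ∧ b ∈ A ∧ z ∈ a ∧ z ∈ b ∧
      A.filter (fun t => z ∈ t) = {a, b} := by
  obtain ⟨a, b, hab, hset⟩ := Finset.card_eq_two.1 h
  have ha : a ∈ A.filter (fun t => z ∈ t) := by rw [hset]; simp
  have hb : b ∈ A.filter (fun t => z ∈ t) := by rw [hset]; simp
  rw [Finset.mem_filter] at ha hb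
  exact ⟨a, b, hab, ha.1, hb.1, ha.2, hb.2, hset⟩

lemma mem_pair_filter {A : Finset (Finset α)} {z : α} {a b t : Finset α}
    (hset : A.filter (fun t => z ∈ t) = {a, b}) (ht : t ∈ A) (hzt : z ∈ t) :
    t = a ∨ t = b := by
  have h : t ∈ A.filter (fun t => z ∈ t) := Finset.mem_filter.2 ⟨ht, hzt⟩
  rw [hset] at h
  simpa using h

/-- double counting: sum of sizes = sum of degrees -/
lemma sum_card_eq_sum_deg {X : Finset α} {A : Finset (Finset α)}
    (hA : ∀ a ∈ A, a ⊆ X) :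
    ∑ a ∈ A, a.card = ∑ z ∈ X, dA A z := by
  have h1 : ∀ a ∈ A, a.card = ∑ z ∈ X, if z ∈ a then 1 else 0 := by
    intro a ha
    rw [← Finset.card_filter]
    congr 1
    rw [Finset.filter_mem_eq_inter, Finset.inter_eq_right.2 (hA a ha)]
  rw [Finset.sum_congr rfl h1, Finset.sum_comm]
  congr 1; ext z
  rw [← Finset.card_filter]
  rfl

/-- THE COVER THEOREM (FC‡) -/
theorem cover_exists (N : ℕ) : ∀ (X : Finset α) (A : Finset (Finset α)) (G : Finset α),
    X.card ≤ N →
    (∀ a ∈ A, a ⊆ X ∧ 2 ≤ a.card) →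
    (∀ z ∈ X, z ∈ G → dA A z ≤ 1) →
    (∀ z ∈ X, z ∉ G → dA A z = 2) →
    CompCond X A G →
    ∃ H, H ⊆ X ∧ (∀ a ∈ A, (a ∩ H).Nonempty) ∧ 2 * H.card ≤ X.card := by
  induction N with
  | zero =>
    intro X A G hcard h1 _ _ _
    have hXe : X = ∅ := Finset.card_eq_zero.1 (Nat.le_zero.1 hcard)
    refine ⟨∅, Finset.empty_subset _, fun a ha => ?_, by simp⟩
    exfalso
    have := (h1 a ha).2
    have h0 : a ⊆ (∅ : Finset α) := hXe ▸ (h1 a ha).1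
    rw [Finset.subset_empty] at h0
    simp [h0] at this
  | succ n ih =>
    intro X A G hcard h1 h2 h3 h4
    have hdeg2 : ∀ z ∈ X, dA A z ≤ 2 := by
      intro z hz
      by_cases hzG : z ∈ G
      · exact (h2 z hz hzG).trans (by norm_num)
      · exact (h3 z hz hzG).le
    by_cases hXe : X = ∅
    · subst hXe
      refine ⟨∅, Finset.empty_subset _, fun a ha => ?_, by simp⟩
      exfalso
      have := (h1 a ha).2
      have h0 : a ⊆ (∅ : Finset α) := (h1 a ha).1
      rw [Finset.subset_empty] at h0
      simp [h0] at this
    by_cases hF1 : ∃ z ∈ X, dA A z = 0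
    · obtain ⟨z, hz, hd0⟩ := hF1
      have hfe : A.filter (fun t => z ∈ t) = ∅ := Finset.card_eq_zero.1 hd0
      have hnotin : ∀ a ∈ A, z ∉ a := by
        intro a ha hq
        have hmem : a ∈ A.filter (fun t => z ∈ t) := Finset.mem_filter.2 ⟨ha, hq⟩
        rw [hfe] at hmem
        exact absurd hmem (Finset.notMem_empty a)
      have hAX' : ∀ a ∈ A, a ⊆ X.erase z := by
        intro a ha q hq
        exact Finset.mem_erase.2 ⟨fun h => hnotin a ha (h ▸ hq), (h1 a ha).1 hq⟩
      have hAfilter : A.filter (fun a => a ⊆ X.erase z) = A :=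
        Finset.filter_true_of_mem hAX'
      have h4' : CompCond (X.erase z) A G := by
        have := transfer1 (X' := X.erase z) (Finset.erase_subset _ _)
          (fun a ha => (h1 a ha).1)
          (fun s hs hns => absurd (hAX' s hs) hns)
          Finset.inter_subset_left h4
        rwa [hAfilter] at this
      have hzcard : 1 ≤ X.card := Finset.card_pos.2 ⟨z, hz⟩
      obtain ⟨H, hHsub, hHcov, hHcard⟩ := ih (X.erase z) A G
        (by rw [Finset.card_erase_of_mem hz]; omega)
        (fun a ha => ⟨hAX' a ha, (h1 a ha).2⟩)
        (fun w hw hwG => h2 w (Finset.mem_of_mem_erase hw) hwG)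
        (fun w hw hwG => h3 w (Finset.mem_of_mem_erase hw) hwG)
        h4'
      refine ⟨H, hHsub.trans (Finset.erase_subset _ _), hHcov, ?_⟩
      refine hHcard.trans (Finset.card_le_card (Finset.erase_subset _ _))
    by_cases hF2 : ∃ z ∈ X, dA A z = 1
    · obtain ⟨z, hz, hd1⟩ := hF2
      obtain ⟨s, hs_eq⟩ := Finset.card_eq_one.1 hd1
      have hsA : s ∈ A ∧ z ∈ s := by
        have : s ∈ A.filter (fun t => z ∈ t) := by rw [hs_eq]; simp
        exact Finset.mem_filter.1 this
      have hz_only : ∀ t ∈ A, z ∈ t → t = s := by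
        intro t ht hzt
        have : t ∈ A.filter (fun t => z ∈ t) := Finset.mem_filter.2 ⟨ht, hzt⟩
        rw [hs_eq] at this; simpa using this
      obtain ⟨y, hy⟩ : (s.erase z).Nonempty := by
        rw [← Finset.card_pos, Finset.card_erase_of_mem hsA.2]
        have := (h1 s hsA.1).2; omega
      have hyz : y ≠ z := (Finset.mem_erase.1 hy).1
      have hys : y ∈ s := (Finset.mem_erase.1 hy).2
      have hyX : y ∈ X := (h1 s hsA.1).1 hys
      set rem := A.filter (fun t => y ∈ t) with hrem
      have hsrem : s ∈ rem := Finset.mem_filter.2 ⟨hsA.1, hys⟩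
      set X' := (X.erase z).erase y with hX'def
      have hX'sub : X' ⊆ X := (Finset.erase_subset _ _).trans (Finset.erase_subset _ _)
      set SSrc := rem.sup id with hSSrc
      set G' := (G ∪ SSrc) ∩ X' with hG'def
      -- characterize membership in X' for sets
      have hsubX' : ∀ t ∈ A, t ∉ rem → t ⊆ X' := by
        intro t ht htr q hq
        have hqy : q ≠ y := fun h => htr (Finset.mem_filter.2 ⟨ht, h ▸ hq⟩)
        have hqz : q ≠ z := by
          rintro rfl
          exact htr (hz_only t ht hq ▸ hsrem)
        exact Finset.mem_erase.2 ⟨hqy, Finset.mem_erase.2 ⟨hqz, (h1 t ht).1 hq⟩⟩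
      have hnsubX' : ∀ t ∈ rem, ¬ t ⊆ X' := by
        intro t htr hsub
        have : y ∈ X' := hsub (Finset.mem_filter.1 htr).2
        exact (Finset.mem_erase.1 this).1 rfl
      set A' := A.filter (fun a => a ⊆ X') with hA'def
      have hmemA' : ∀ t, t ∈ A' ↔ t ∈ A ∧ t ∉ rem := by
        intro t
        constructor
        · intro ht
          obtain ⟨ht1, ht2⟩ := Finset.mem_filter.1 ht
          exact ⟨ht1, fun hr => hnsubX' t hr ht2⟩
        · intro ⟨ht1, ht2⟩
          exact Finset.mem_filter.2 ⟨ht1, hsubX' t ht1 ht2⟩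
      -- cardinality facts
      have hcard2 : X.card = X'.card + 2 := by
        rw [hX'def, Finset.card_erase_of_mem (Finset.mem_erase.2 ⟨hyz, hyX⟩),
          Finset.card_erase_of_mem hz]
        have : 1 ≤ X.card := Finset.card_pos.2 ⟨z, hz⟩
        have h2c : 2 ≤ X.card := by
          refine Finset.one_lt_card.2 ⟨y, hyX, z, hz, hyz⟩
        omega
      -- h2'
      have h2' : ∀ w ∈ X', w ∈ G' → dA A' w ≤ 1 := by
        intro w hw hwG'
        by_cases hwS : w ∈ SSrc
        · obtain ⟨t, htr, hwt⟩ : ∃ t ∈ rem, w ∈ t := by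
            simpa [hSSrc, Finset.mem_sup] using hwS
          have hsubset : A'.filter (fun u => w ∈ u) ⊆ (A.filter (fun u => w ∈ u)).erase t := by
            intro u hu
            obtain ⟨hu1, hu2⟩ := Finset.mem_filter.1 hu
            refine Finset.mem_erase.2 ⟨?_, Finset.mem_filter.2 ⟨((hmemA' u).1 hu1).1, hu2⟩⟩
            rintro rfl
            exact ((hmemA' u).1 hu1).2 htr
          have hle := Finset.card_le_card hsubset
          rw [Finset.card_erase_of_mem
            (Finset.mem_filter.2 ⟨(Finset.mem_filter.1 htr).1, hwt⟩)] at hle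
          have := hdeg2 w (hX'sub hw)
          unfold dA at this ⊢
          omega
        · have hwG : w ∈ G := by
            rcases Finset.mem_union.1 (Finset.mem_inter.1 hwG').1 with h | h
            · exact h
            · exact absurd h hwS
          have := h2 w (hX'sub hw) hwG
          refine le_trans (Finset.card_le_card ?_) this
          exact Finset.monotone_filter_left _ (Finset.filter_subset _ _)
      -- h3'
      have h3' : ∀ w ∈ X', w ∉ G' → dA A' w = 2 := by
        intro w hw hwG'
        have hwX : w ∈ X := hX'sub hw
        have hwG : w ∉ G := fun h =>
          hwG' (Finset.mem_inter.2 ⟨Finset.mem_union.2 (Or.inl h), hw⟩)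
        have hwS : w ∉ SSrc := fun h =>
          hwG' (Finset.mem_inter.2 ⟨Finset.mem_union.2 (Or.inr h), hw⟩)
        have heqf : A'.filter (fun u => w ∈ u) = A.filter (fun u => w ∈ u) := by
          apply Finset.Subset.antisymm
          · exact Finset.monotone_filter_left _ (Finset.filter_subset _ _)
          · intro u hu
            obtain ⟨hu1, hu2⟩ := Finset.mem_filter.1 hu
            refine Finset.mem_filter.2 ⟨(hmemA' u).2 ⟨hu1, ?_⟩, hu2⟩
            intro hur
            exact hwS (Finset.mem_sup.2 ⟨u, hur, hu2⟩)
        unfold dA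
        rw [heqf]
        exact h3 w hwX hwG
      -- h4'
      have h4' : CompCond X' A' G' := by
        refine transfer1 hX'sub (fun a ha => (h1 a ha).1) ?_ ?_ h4
        · intro t ht htns q hq
          have htr : t ∈ rem := by
            by_contra hc
            exact htns (hsubX' t ht hc)
          obtain ⟨hq1, hq2⟩ := Finset.mem_inter.1 hq
          exact Finset.mem_inter.2
            ⟨Finset.mem_union.2 (Or.inr (Finset.mem_sup.2 ⟨t, htr, hq1⟩)), hq2⟩
        · intro q hq
          obtain ⟨hq1, hq2⟩ := Finset.mem_inter.1 hq
          exact Finset.mem_inter.2 ⟨Finset.mem_union.2 (Or.inl hq1), hq2⟩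
      obtain ⟨H, hHsub, hHcov, hHcard⟩ := ih X' A' G'
        (by omega)
        (fun a ha => ⟨(Finset.mem_filter.1 ha).2, (h1 a (Finset.mem_filter.1 ha).1).2⟩)
        h2' h3' h4'
      refine ⟨insert y H, ?_, ?_, ?_⟩
      · intro q hq
        rcases Finset.mem_insert.1 hq with h | h
        · exact h ▸ hyX
        · exact hX'sub (hHsub h)
      · intro a ha
        by_cases har : a ∈ rem
        · exact ⟨y, Finset.mem_inter.2 ⟨(Finset.mem_filter.1 har).2, Finset.mem_insert_self _ _⟩⟩
        · obtain ⟨q, hq⟩ := hHcov a ((hmemA' a).2 ⟨ha, har⟩)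
          obtain ⟨hq1, hq2⟩ := Finset.mem_inter.1 hq
          exact ⟨q, Finset.mem_inter.2 ⟨hq1, Finset.mem_insert_of_mem hq2⟩⟩
      · have := Finset.card_insert_le y H
        omega
    -- now every point has degree exactly 2, and G ∩ X = ∅
    have hdeg : ∀ z ∈ X, dA A z = 2 := by
      intro z hz
      rcases Nat.lt_or_ge (dA A z) 2 with h | h
      · interval_cases hd : dA A z
        · exact absurd ⟨z, hz, hd⟩ hF1
        · exact absurd ⟨z, hz, hd⟩ hF2
      · exact le_antisymm (hdeg2 z hz) h
    have hGX : ∀ z ∈ X, z ∉ G := by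
      intro z hz hzG
      have ha := h2 z hz hzG
      have hb := hdeg z hz
      omega
    by_cases hF3 : ∃ a ∈ A, ∃ b ∈ A, a ≠ b ∧ 2 ≤ (a ∩ b).card
    · obtain ⟨a, ha, b, hb, hab, hDc⟩ := hF3
      set D := a ∩ b with hDdef
      have hDX : D ⊆ X := Finset.inter_subset_left.trans (h1 a ha).1
      have hDfilter : ∀ z ∈ D, A.filter (fun t => z ∈ t) = {a, b} := by
        intro z hzD
        have hza : z ∈ a := (Finset.mem_inter.1 hzD).1
        have hzb : z ∈ b := (Finset.mem_inter.1 hzD).2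
        have hsub : ({a, b} : Finset (Finset α)) ⊆ A.filter (fun t => z ∈ t) := by
          intro t ht
          rcases Finset.mem_insert.1 ht with h | h
          · exact h ▸ Finset.mem_filter.2 ⟨ha, hza⟩
          · exact (Finset.mem_singleton.1 h) ▸ Finset.mem_filter.2 ⟨hb, hzb⟩
        refine (Finset.eq_of_subset_of_card_le hsub ?_).symm
        rw [Finset.card_pair hab]
        have := hdeg z (hDX hzD)
        unfold dA at this
        omega

      set X' := X \ D with hX'def
      have hX'sub : X' ⊆ X := Finset.sdiff_subset
      set G' := (G ∪ (a ∪ b)) ∩ X' with hG'def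
      have hsubX' : ∀ t ∈ A, t ≠ a → t ≠ b → t ⊆ X' := by
        intro t ht hta htb q hq
        refine Finset.mem_sdiff.2 ⟨(h1 t ht).1 hq, fun hqD => ?_⟩
        rcases mem_pair_filter (hDfilter q hqD) ht hq with h | h
        · exact hta h
        · exact htb h
      have hDne : D.Nonempty := Finset.card_pos.1 (by omega)
      obtain ⟨z₁, hz₁⟩ := hDne
      have hansub : ¬ a ⊆ X' := fun h =>
        (Finset.mem_sdiff.1 (h (Finset.mem_inter.1 hz₁).1)).2 hz₁
      have hbnsub : ¬ b ⊆ X' := fun h =>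
        (Finset.mem_sdiff.1 (h (Finset.mem_inter.1 hz₁).2)).2 hz₁
      set A' := A.filter (fun t => t ⊆ X') with hA'def
      have hmemA' : ∀ t, t ∈ A' ↔ t ∈ A ∧ t ≠ a ∧ t ≠ b := by
        intro t
        constructor
        · intro ht
          obtain ⟨ht1, ht2⟩ := Finset.mem_filter.1 ht
          exact ⟨ht1, fun h => hansub (h ▸ ht2), fun h => hbnsub (h ▸ ht2)⟩
        · intro ⟨ht1, ht2, ht3⟩
          exact Finset.mem_filter.2 ⟨ht1, hsubX' t ht1 ht2 ht3⟩
      have hcardX' : X'.card = X.card - D.card := Finset.card_sdiff_of_subset hDX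
      have hDcX : D.card ≤ X.card := Finset.card_le_card hDX
      have h2' : ∀ w ∈ X', w ∈ G' → dA A' w ≤ 1 := by
        intro w hw hwG'
        by_cases hwS : w ∈ a ∪ b
        · have hwt : ∃ t, (t = a ∨ t = b) ∧ w ∈ t := by
            rcases Finset.mem_union.1 hwS with h | h
            exacts [⟨a, Or.inl rfl, h⟩, ⟨b, Or.inr rfl, h⟩]
          obtain ⟨t, htab, hwt⟩ := hwt
          have htA : t ∈ A := by rcases htab with h | h <;> exact h ▸ (by assumption)
          have hsubset : A'.filter (fun u => w ∈ u) ⊆ (A.filter (fun u => w ∈ u)).erase t := by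
            intro u hu
            obtain ⟨hu1, hu2⟩ := Finset.mem_filter.1 hu
            refine Finset.mem_erase.2 ⟨?_, Finset.mem_filter.2 ⟨((hmemA' u).1 hu1).1, hu2⟩⟩
            rintro rfl
            rcases htab with h | h
            · exact ((hmemA' u).1 hu1).2.1 h
            · exact ((hmemA' u).1 hu1).2.2 h
          have hle := Finset.card_le_card hsubset
          rw [Finset.card_erase_of_mem (Finset.mem_filter.2 ⟨htA, hwt⟩)] at hle
          have := hdeg2 w (hX'sub hw)
          unfold dA at this ⊢
          omega
        · have hwG : w ∈ G := by
            rcases Finset.mem_union.1 (Finset.mem_inter.1 hwG').1 with h | h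
            · exact h
            · exact absurd h hwS
          refine le_trans (Finset.card_le_card ?_) (h2 w (hX'sub hw) hwG)
          exact Finset.monotone_filter_left _ (Finset.filter_subset _ _)
      have h3' : ∀ w ∈ X', w ∉ G' → dA A' w = 2 := by
        intro w hw hwG'
        have hwX : w ∈ X := hX'sub hw
        have hwG : w ∉ G := fun h =>
          hwG' (Finset.mem_inter.2 ⟨Finset.mem_union.2 (Or.inl h), hw⟩)
        have hwS : w ∉ a ∪ b := fun h =>
          hwG' (Finset.mem_inter.2 ⟨Finset.mem_union.2 (Or.inr h), hw⟩)
        have heqf : A'.filter (fun u => w ∈ u) = A.filter (fun u => w ∈ u) := by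
          apply Finset.Subset.antisymm
          · exact Finset.monotone_filter_left _ (Finset.filter_subset _ _)
          · intro u hu
            obtain ⟨hu1, hu2⟩ := Finset.mem_filter.1 hu
            refine Finset.mem_filter.2 ⟨(hmemA' u).2 ⟨hu1, ?_, ?_⟩, hu2⟩
            · rintro rfl; exact hwS (Finset.mem_union.2 (Or.inl hu2))
            · rintro rfl; exact hwS (Finset.mem_union.2 (Or.inr hu2))
        unfold dA
        rw [heqf]
        exact h3 w hwX hwG
      have h4' : CompCond X' A' G' := by
        refine transfer1 hX'sub (fun t ht => (h1 t ht).1) ?_ ?_ h4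
        · intro t ht htns q hq
          obtain ⟨hq1, hq2⟩ := Finset.mem_inter.1 hq
          have : t = a ∨ t = b := by
            by_contra hc
            push_neg at hc
            exact htns (hsubX' t ht hc.1 hc.2)
          refine Finset.mem_inter.2 ⟨Finset.mem_union.2 (Or.inr ?_), hq2⟩
          rcases this with h | h
          · exact Finset.mem_union.2 (Or.inl (h ▸ hq1))
          · exact Finset.mem_union.2 (Or.inr (h ▸ hq1))
        · intro q hq
          obtain ⟨hq1, hq2⟩ := Finset.mem_inter.1 hq
          exact Finset.mem_inter.2 ⟨Finset.mem_union.2 (Or.inl hq1), hq2⟩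
      obtain ⟨H, hHsub, hHcov, hHcard⟩ := ih X' A' G'
        (by omega)
        (fun t ht => ⟨(Finset.mem_filter.1 ht).2, (h1 t (Finset.mem_filter.1 ht).1).2⟩)
        h2' h3' h4'
      refine ⟨insert z₁ H, ?_, ?_, ?_⟩
      · intro q hq
        rcases Finset.mem_insert.1 hq with h | h
        · exact h ▸ hDX hz₁
        · exact hX'sub (hHsub h)
      · intro t ht
        by_cases hta : t = a
        · exact ⟨z₁, Finset.mem_inter.2 ⟨hta ▸ (Finset.mem_inter.1 hz₁).1,
            Finset.mem_insert_self _ _⟩⟩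
        by_cases htb : t = b
        · exact ⟨z₁, Finset.mem_inter.2 ⟨htb ▸ (Finset.mem_inter.1 hz₁).2,
            Finset.mem_insert_self _ _⟩⟩
        obtain ⟨q, hq⟩ := hHcov t ((hmemA' t).2 ⟨ht, hta, htb⟩)
        obtain ⟨hq1, hq2⟩ := Finset.mem_inter.1 hq
        exact ⟨q, Finset.mem_inter.2 ⟨hq1, Finset.mem_insert_of_mem hq2⟩⟩
      · have := Finset.card_insert_le z₁ H
        omega
    by_cases hF4 : ∃ e ∈ A, e.card = 2
    · obtain ⟨e, he, hec⟩ := hF4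
      obtain ⟨u, v, huv, heuv⟩ := Finset.card_eq_two.1 hec
      have hue : u ∈ e := by rw [heuv]; simp
      have hve : v ∈ e := by rw [heuv]; simp
      have huX : u ∈ X := (h1 e he).1 hue
      have hvX : v ∈ X := (h1 e he).1 hve
      have hshare : ∀ s ∈ A, ∀ t ∈ A, s ≠ t → (s ∩ t).card ≤ 1 := by
        intro s hsm t htm hst
        by_contra hc
        exact hF3 ⟨s, hsm, t, htm, hst, by omega⟩
      -- the second set at u
      have other : ∀ z, z ∈ X → z ∈ e →
          ∃ a, a ∈ A ∧ a ≠ e ∧ z ∈ a ∧ A.filter (fun t => z ∈ t) = {e, a} := by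
        intro z hzX hze
        obtain ⟨s, t, hst, hsm, htm, hzs, hzt, hset⟩ := sets_of_point (hdeg z hzX)
        have hemem : e = s ∨ e = t := mem_pair_filter hset he hze
        rcases hemem with h | h
        · subst h
          exact ⟨t, htm, fun hh => hst hh.symm, hzt, hset⟩
        · subst h
          exact ⟨s, hsm, fun hh => hst hh, hzs, by rw [hset]; exact Finset.pair_comm s e⟩
      obtain ⟨a, haA, hae, hua, hfu⟩ := other u huX hue
      obtain ⟨b, hbA, hbe, hvb, hfv⟩ := other v hvX hve
      have hab : a ≠ b := by
        rintro rfl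
        have h2c : 2 ≤ (a ∩ e).card := by
          have : ({u, v} : Finset α) ⊆ a ∩ e := by
            intro q hq
            rcases Finset.mem_insert.1 hq with h | h
            · exact h ▸ Finset.mem_inter.2 ⟨hua, hue⟩
            · exact (Finset.mem_singleton.1 h) ▸ Finset.mem_inter.2 ⟨hvb, hve⟩
          calc 2 = ({u, v} : Finset α).card := (Finset.card_pair huv).symm
          _ ≤ _ := Finset.card_le_card this
        exact absurd (hshare a haA e he hae) (by omega)
      have hva : v ∉ a := by
        intro hv'
        have h2c : 2 ≤ (a ∩ e).card := by
          have : ({u, v} : Finset α) ⊆ a ∩ e := by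
            intro q hq
            rcases Finset.mem_insert.1 hq with h | h
            · exact h ▸ Finset.mem_inter.2 ⟨hua, hue⟩
            · exact (Finset.mem_singleton.1 h) ▸ Finset.mem_inter.2 ⟨hv', hve⟩
          calc 2 = ({u, v} : Finset α).card := (Finset.card_pair huv).symm
          _ ≤ _ := Finset.card_le_card this
        exact absurd (hshare a haA e he hae) (by omega)
      have hub : u ∉ b := by
        intro hu'
        have h2c : 2 ≤ (b ∩ e).card := by
          have : ({u, v} : Finset α) ⊆ b ∩ e := by
            intro q hq
            rcases Finset.mem_insert.1 hq with h | h
            · exact h ▸ Finset.mem_inter.2 ⟨hu', hue⟩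
            · exact (Finset.mem_singleton.1 h) ▸ Finset.mem_inter.2 ⟨hvb, hve⟩
          calc 2 = ({u, v} : Finset α).card := (Finset.card_pair huv).symm
          _ ≤ _ := Finset.card_le_card this
        exact absurd (hshare b hbA e he hbe) (by omega)
      set c := (a.erase u) ∪ (b.erase v) with hcdef
      have hcu : u ∉ c := by
        simp only [hcdef, Finset.mem_union, Finset.mem_erase]
        push_neg
        exact ⟨fun h => absurd rfl h, fun _ => hub⟩
      have hcv : v ∉ c := by
        simp only [hcdef, Finset.mem_union, Finset.mem_erase]
        push_neg
        exact ⟨fun _ => hva, fun h => absurd rfl h⟩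
      have haec : (a.erase u).Nonempty := by
        rw [← Finset.card_pos, Finset.card_erase_of_mem hua]
        have := (h1 a haA).2; omega
      have hbec : (b.erase v).Nonempty := by
        rw [← Finset.card_pos, Finset.card_erase_of_mem hvb]
        have := (h1 b hbA).2; omega
      have hfilw : ∀ w, w ∈ a ∩ b → A.filter (fun t => w ∈ t) = {a, b} := by
        intro w hw
        obtain ⟨hwa, hwb⟩ := Finset.mem_inter.1 hw
        have hwX : w ∈ X := (h1 a haA).1 hwa
        have hsub : ({a, b} : Finset (Finset α)) ⊆ A.filter (fun t => w ∈ t) := by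
          intro t ht
          rcases Finset.mem_insert.1 ht with h | h
          · exact h ▸ Finset.mem_filter.2 ⟨haA, hwa⟩
          · exact (Finset.mem_singleton.1 h) ▸ Finset.mem_filter.2 ⟨hbA, hwb⟩
        refine (Finset.eq_of_subset_of_card_le hsub ?_).symm
        rw [Finset.card_pair hab]
        have := hdeg w hwX
        unfold dA at this
        omega
      by_cases hF4a : c.card ≤ 1
      · -- F4a: impossible by h4 (odd pair-triangle)
        exfalso
        obtain ⟨w, hwa'⟩ := haec
        obtain ⟨w', hwb'⟩ := hbec
        have hwc : w ∈ c := Finset.mem_union.2 (Or.inl hwa')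
        have hw'c : w' ∈ c := Finset.mem_union.2 (Or.inr hwb')
        have hww' : w = w' := by
          by_contra hne
          have : 2 ≤ c.card := Finset.one_lt_card.2 ⟨w, hwc, w', hw'c, hne⟩
          omega
        subst hww'
        have hcw : c = {w} := by
          apply Finset.eq_singleton_iff_unique_mem.2
          refine ⟨hwc, fun q hq => ?_⟩
          by_contra hne
          have : 2 ≤ c.card := Finset.one_lt_card.2 ⟨q, hq, w, hwc, hne⟩
          omega
        have haw : a.erase u = {w} := by
          apply Finset.eq_singleton_iff_unique_mem.2
          refine ⟨hwa', fun q hq => ?_⟩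
          have : q ∈ c := Finset.mem_union.2 (Or.inl hq)
          rw [hcw] at this; simpa using this
        have hbw : b.erase v = {w} := by
          apply Finset.eq_singleton_iff_unique_mem.2
          refine ⟨hwb', fun q hq => ?_⟩
          have : q ∈ c := Finset.mem_union.2 (Or.inr hq)
          rw [hcw] at this; simpa using this
        have ha2 : a = {u, w} := by
          have := Finset.insert_erase hua
          rw [haw] at this
          rw [← this]
        have hb2 : b = {v, w} := by
          have := Finset.insert_erase hvb
          rw [hbw] at this
          rw [← this]
        have hwu : w ≠ u := (Finset.mem_erase.1 hwa').1
        have hwv : w ≠ v := (Finset.mem_erase.1 hwb').1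
        have hwX : w ∈ X := (h1 a haA).1 ((Finset.mem_erase.1 hwa').2)
        have hwab : w ∈ a ∩ b :=
          Finset.mem_inter.2 ⟨(Finset.mem_erase.1 hwa').2, (Finset.mem_erase.1 hwb').2⟩
        set C₀ : Finset α := {u, v, w} with hC₀
        have hC₀X : C₀ ⊆ X := by
          intro q hq
          rcases Finset.mem_insert.1 hq with h | h
          · exact h ▸ huX
          rcases Finset.mem_insert.1 h with h' | h'
          · exact h' ▸ hvX
          · exact (Finset.mem_singleton.1 h') ▸ hwX
        have heC₀ : e ⊆ C₀ := by
          rw [heuv]; intro q hq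
          rcases Finset.mem_insert.1 hq with h | h
          · exact h ▸ (by simp [hC₀])
          · exact (Finset.mem_singleton.1 h) ▸ (by simp [hC₀])
        have haC₀ : a ⊆ C₀ := by
          rw [ha2]; intro q hq
          rcases Finset.mem_insert.1 hq with h | h
          · exact h ▸ (by simp [hC₀])
          · exact (Finset.mem_singleton.1 h) ▸ (by simp [hC₀])
        have hbC₀ : b ⊆ C₀ := by
          rw [hb2]; intro q hq
          rcases Finset.mem_insert.1 hq with h | h
          · exact h ▸ (by simp [hC₀])
          · exact (Finset.mem_singleton.1 h) ▸ (by simp [hC₀])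
        have hclosed : IsClosed' A C₀ := by
          intro t ht ⟨q, hq⟩
          obtain ⟨hqt, hqC⟩ := Finset.mem_inter.1 hq
          have : t = e ∨ t = a ∨ t = b := by
            rcases Finset.mem_insert.1 hqC with h | h
            · subst h
              rcases mem_pair_filter hfu ht hqt with h | h
              exacts [Or.inl h, Or.inr (Or.inl h)]
            rcases Finset.mem_insert.1 h with h' | h'
            · subst h'
              rcases mem_pair_filter hfv ht hqt with h | h
              exacts [Or.inl h, Or.inr (Or.inr h)]
            · rw [Finset.mem_singleton] at h'
              subst h'
              rcases mem_pair_filter (hfilw q hwab) ht hqt with h | h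
              exacts [Or.inr (Or.inl h), Or.inr (Or.inr h)]
          rcases this with h | h | h
          exacts [h ▸ heC₀, h ▸ haC₀, h ▸ hbC₀]
        -- the component of u is C₀, contradiction with h4
        have hKsub : conn X A u ⊆ C₀ := conn_min hC₀X (by simp [hC₀]) hclosed
        have hKclosed : IsClosed' A (conn X A u) := conn_closed (fun t ht => (h1 t ht).1)
        have hKu : u ∈ conn X A u := mem_conn_self _ huX
        have heK : e ⊆ conn X A u := hKclosed e he ⟨u, Finset.mem_inter.2 ⟨hue, hKu⟩⟩
        have haK : a ⊆ conn X A u := hKclosed a haA ⟨u, Finset.mem_inter.2 ⟨hua, hKu⟩⟩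
        have hbK : b ⊆ conn X A u :=
          hKclosed b hbA ⟨v, Finset.mem_inter.2 ⟨hvb, heK hve⟩⟩
        have hKeq : conn X A u = C₀ := by
          apply Finset.Subset.antisymm hKsub
          intro q hq
          rcases Finset.mem_insert.1 hq with h | h
          · exact h ▸ hKu
          rcases Finset.mem_insert.1 h with h' | h'
          · exact h' ▸ heK hve
          · exact (Finset.mem_singleton.1 h') ▸ haK ((Finset.mem_erase.1 hwa').2)
        have hC₀card : C₀.card = 3 := by
          rw [hC₀]
          rw [Finset.card_insert_of_notMem (by simp [huv, hwu.symm]),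
            Finset.card_insert_of_notMem (by simp [hwv.symm]), Finset.card_singleton]
        rcases h4 u huX with hGc | hbig | heven
        · obtain ⟨g, hg⟩ := hGc
          obtain ⟨hg1, hg2⟩ := Finset.mem_inter.1 hg
          exact hGX g (conn_subset _ _ _ hg2) hg1
        · obtain ⟨t, htA, htsub, htcard⟩ := hbig
          rw [hKeq] at htsub
          obtain ⟨q, hqt⟩ : t.Nonempty := Finset.card_pos.1 (by omega)
          have : t = e ∨ t = a ∨ t = b := by
            rcases Finset.mem_insert.1 (htsub hqt) with h | h
            · subst h
              rcases mem_pair_filter hfu htA hqt with h | h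
              exacts [Or.inl h, Or.inr (Or.inl h)]
            rcases Finset.mem_insert.1 h with h' | h'
            · subst h'
              rcases mem_pair_filter hfv htA hqt with h | h
              exacts [Or.inl h, Or.inr (Or.inr h)]
            · rw [Finset.mem_singleton] at h'
              subst h'
              rcases mem_pair_filter (hfilw q hwab) htA hqt with h | h
              exacts [Or.inr (Or.inl h), Or.inr (Or.inr h)]
          rcases this with h | h | h
          · rw [h, hec] at htcard; omega
          · rw [h, ha2, Finset.card_pair hwu.symm] at htcard; omega
          · rw [h, hb2, Finset.card_pair hwv.symm] at htcard; omega
        · rw [hKeq, hC₀card] at heven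
          exact (Nat.not_even_iff_odd.2 (by decide)) heven
      have hc2 : 2 ≤ c.card := by omega
      by_cases hF4b : c ∈ A
      · -- F4b : small closed structure plus independent rest
        have habdisj : a ∩ b = ∅ := by
          by_contra hne
          obtain ⟨z, hzab⟩ := Finset.nonempty_iff_ne_empty.2 hne
          obtain ⟨hza, hzb⟩ := Finset.mem_inter.1 hzab
          have hzu : z ≠ u := fun h => hub (h ▸ hzb)
          have hzc : z ∈ c := Finset.mem_union.2 (Or.inl (Finset.mem_erase.2 ⟨hzu, hza⟩))
          rcases mem_pair_filter (hfilw z hzab) hF4b hzc with h | h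
          · exact hcu (h ▸ hua)
          · exact hcv (h ▸ hvb)
        set C₀ := insert u (insert v c) with hC₀def
        have hcC₀ : c ⊆ C₀ := by
          intro q hq; exact Finset.mem_insert_of_mem (Finset.mem_insert_of_mem hq)
        have hcab : c ⊆ a ∪ b := by
          intro q hq
          rcases Finset.mem_union.1 hq with h | h
          · exact Finset.mem_union.2 (Or.inl (Finset.mem_erase.1 h).2)
          · exact Finset.mem_union.2 (Or.inr (Finset.mem_erase.1 h).2)
        have hC₀X : C₀ ⊆ X := by
          intro q hq
          rcases Finset.mem_insert.1 hq with h | h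
          · exact h ▸ huX
          rcases Finset.mem_insert.1 h with h' | h'
          · exact h' ▸ hvX
          · rcases Finset.mem_union.1 (hcab h') with hh | hh
            · exact (h1 a haA).1 hh
            · exact (h1 b hbA).1 hh
        have heC₀ : e ⊆ C₀ := by
          rw [heuv]; intro q hq
          rcases Finset.mem_insert.1 hq with h | h
          · exact h ▸ Finset.mem_insert_self _ _
          · exact (Finset.mem_singleton.1 h) ▸
              Finset.mem_insert_of_mem (Finset.mem_insert_self _ _)
        have haC₀ : a ⊆ C₀ := by
          intro q hq
          by_cases hqu : q = u
          · exact hqu ▸ Finset.mem_insert_self _ _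
          · exact hcC₀ (Finset.mem_union.2 (Or.inl (Finset.mem_erase.2 ⟨hqu, hq⟩)))
        have hbC₀ : b ⊆ C₀ := by
          intro q hq
          by_cases hqv : q = v
          · exact hqv ▸ Finset.mem_insert_of_mem (Finset.mem_insert_self _ _)
          · exact hcC₀ (Finset.mem_union.2 (Or.inr (Finset.mem_erase.2 ⟨hqv, hq⟩)))
        have hsets_meet : ∀ t ∈ A, (t ∩ C₀).Nonempty → t = e ∨ t = a ∨ t = b ∨ t = c := by
          intro t ht ⟨q, hq⟩
          obtain ⟨hqt, hqC⟩ := Finset.mem_inter.1 hq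
          rcases Finset.mem_insert.1 hqC with h | h
          · subst h
            rcases mem_pair_filter hfu ht hqt with h | h
            exacts [Or.inl h, Or.inr (Or.inl h)]
          rcases Finset.mem_insert.1 h with h' | h'
          · subst h'
            rcases mem_pair_filter hfv ht hqt with h | h
            exacts [Or.inl h, Or.inr (Or.inr (Or.inl h))]
          · rcases Finset.mem_union.1 h' with hh | hh
            · -- q ∈ a.erase u
              have hqa : q ∈ a := (Finset.mem_erase.1 hh).2
              have hqX : q ∈ X := (h1 a haA).1 hqa
              have hqc : q ∈ c := Finset.mem_union.2 (Or.inl hh)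
              have hac : a ≠ c := fun h => hcu (h ▸ hua)
              have hfq : A.filter (fun t => q ∈ t) = {a, c} := by
                have hsub : ({a, c} : Finset (Finset α)) ⊆ A.filter (fun t => q ∈ t) := by
                  intro t' ht'
                  rcases Finset.mem_insert.1 ht' with h | h
                  · exact h ▸ Finset.mem_filter.2 ⟨haA, hqa⟩
                  · exact (Finset.mem_singleton.1 h) ▸ Finset.mem_filter.2 ⟨hF4b, hqc⟩
                refine (Finset.eq_of_subset_of_card_le hsub ?_).symm
                rw [Finset.card_pair hac]
                have := hdeg q hqX
                unfold dA at this; omega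
              rcases mem_pair_filter hfq ht hqt with h | h
              exacts [Or.inr (Or.inl h), Or.inr (Or.inr (Or.inr h))]
            · -- q ∈ b.erase v
              have hqb : q ∈ b := (Finset.mem_erase.1 hh).2
              have hqX : q ∈ X := (h1 b hbA).1 hqb
              have hqc : q ∈ c := Finset.mem_union.2 (Or.inr hh)
              have hbc : b ≠ c := fun h => hcv (h ▸ hvb)
              have hfq : A.filter (fun t => q ∈ t) = {b, c} := by
                have hsub : ({b, c} : Finset (Finset α)) ⊆ A.filter (fun t => q ∈ t) := by
                  intro t' ht'
                  rcases Finset.mem_insert.1 ht' with h | h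
                  · exact h ▸ Finset.mem_filter.2 ⟨hbA, hqb⟩
                  · exact (Finset.mem_singleton.1 h) ▸ Finset.mem_filter.2 ⟨hF4b, hqc⟩
                refine (Finset.eq_of_subset_of_card_le hsub ?_).symm
                rw [Finset.card_pair hbc]
                have := hdeg q hqX
                unfold dA at this; omega
              rcases mem_pair_filter hfq ht hqt with h | h
              exacts [Or.inr (Or.inr (Or.inl h)), Or.inr (Or.inr (Or.inr h))]
        set X₂ := X \ C₀ with hX₂def
        have hX₂sub : X₂ ⊆ X := Finset.sdiff_subset
        set A₂ := A.filter (fun t => t ⊆ X₂) with hA₂def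
        have hmemA₂ : ∀ t, t ∈ A₂ ↔ t ∈ A ∧ (t ≠ e ∧ t ≠ a ∧ t ≠ b ∧ t ≠ c) := by
          intro t
          constructor
          · intro ht
            obtain ⟨ht1, ht2⟩ := Finset.mem_filter.1 ht
            have hdisj : ∀ s ⊆ C₀, s.Nonempty → t ≠ s := by
              rintro s hsC hsne rfl
              obtain ⟨q, hq⟩ := hsne
              exact (Finset.mem_sdiff.1 (ht2 hq)).2 (hsC hq)
            exact ⟨ht1, hdisj e heC₀ ⟨u, hue⟩, hdisj a haC₀ ⟨u, hua⟩,
              hdisj b hbC₀ ⟨v, hvb⟩, hdisj c hcC₀ (Finset.card_pos.1 (by omega))⟩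
          · intro ⟨ht1, ht2, ht3, ht4, ht5⟩
            refine Finset.mem_filter.2 ⟨ht1, fun q hq => Finset.mem_sdiff.2 ⟨(h1 t ht1).1 hq, fun hqC => ?_⟩⟩
            rcases hsets_meet t ht1 ⟨q, Finset.mem_inter.2 ⟨hq, hqC⟩⟩ with h | h | h | h
            exacts [ht2 h, ht3 h, ht4 h, ht5 h]
        have hC₀card : C₀.card = c.card + 2 := by
          rw [hC₀def, Finset.card_insert_of_notMem (by
            simp only [Finset.mem_insert]
            push_neg
            exact ⟨huv, hcu⟩), Finset.card_insert_of_notMem hcv]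
        have hC₀X' : C₀.card ≤ X.card := Finset.card_le_card hC₀X
        have hX₂card : X₂.card = X.card - C₀.card := Finset.card_sdiff_of_subset hC₀X
        have h3₂ : ∀ w ∈ X₂, w ∉ (∅ : Finset α) → dA A₂ w = 2 := by
          intro w hw _
          have hwX : w ∈ X := hX₂sub hw
          have heqf : A₂.filter (fun t => w ∈ t) = A.filter (fun t => w ∈ t) := by
            apply Finset.Subset.antisymm
            · exact Finset.monotone_filter_left _ (Finset.filter_subset _ _)
            · intro t ht
              obtain ⟨ht1, ht2⟩ := Finset.mem_filter.1 ht
              refine Finset.mem_filter.2 ⟨(hmemA₂ t).2 ⟨ht1, ?_, ?_, ?_, ?_⟩, ht2⟩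
              · rintro rfl; exact (Finset.mem_sdiff.1 hw).2 (heC₀ ht2)
              · rintro rfl; exact (Finset.mem_sdiff.1 hw).2 (haC₀ ht2)
              · rintro rfl; exact (Finset.mem_sdiff.1 hw).2 (hbC₀ ht2)
              · rintro rfl; exact (Finset.mem_sdiff.1 hw).2 (hcC₀ ht2)
          unfold dA
          rw [heqf]
          exact hdeg w hwX
        have h4₂ : CompCond X₂ A₂ ∅ := by
          refine transfer1 hX₂sub (fun t ht => (h1 t ht).1) ?_ ?_ h4
          · intro t ht htns q hq
            obtain ⟨hq1, hq2⟩ := Finset.mem_inter.1 hq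
            exfalso
            have htmem : t ∉ A₂ := fun h => htns (Finset.mem_filter.1 h).2
            have : t = e ∨ t = a ∨ t = b ∨ t = c := by
              by_contra hc
              push_neg at hc
              exact htmem ((hmemA₂ t).2 ⟨ht, hc.1, hc.2.1, hc.2.2.1, hc.2.2.2⟩)
            have hqC₀ : q ∈ C₀ := by
              rcases this with h | h | h | h
              exacts [heC₀ (h ▸ hq1), haC₀ (h ▸ hq1), hbC₀ (h ▸ hq1), hcC₀ (h ▸ hq1)]
            exact (Finset.mem_sdiff.1 hq2).2 hqC₀
          · intro q hq
            obtain ⟨hq1, hq2⟩ := Finset.mem_inter.1 hq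
            exact absurd hq1 (hGX q (hX₂sub hq2))
        obtain ⟨H₂, hH₂sub, hH₂cov, hH₂card⟩ := ih X₂ A₂ ∅
          (by omega)
          (fun t ht => ⟨(Finset.mem_filter.1 ht).2, (h1 t (Finset.mem_filter.1 ht).1).2⟩)
          (by intro z _ hz; exact absurd hz (Finset.notMem_empty z))
          h3₂ h4₂
        obtain ⟨y, hy⟩ := hbec
        have hyb : y ∈ b := (Finset.mem_erase.1 hy).2
        have hyc : y ∈ c := Finset.mem_union.2 (Or.inr hy)
        refine ⟨insert u (insert y H₂), ?_, ?_, ?_⟩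
        · intro q hq
          rcases Finset.mem_insert.1 hq with h | h
          · exact h ▸ huX
          rcases Finset.mem_insert.1 h with h' | h'
          · exact h' ▸ (h1 b hbA).1 hyb
          · exact hX₂sub (hH₂sub h')
        · intro t ht
          by_cases hte : t = e
          · exact ⟨u, Finset.mem_inter.2 ⟨hte ▸ hue, Finset.mem_insert_self _ _⟩⟩
          by_cases hta : t = a
          · exact ⟨u, Finset.mem_inter.2 ⟨hta ▸ hua, Finset.mem_insert_self _ _⟩⟩
          by_cases htb : t = b
          · exact ⟨y, Finset.mem_inter.2 ⟨htb ▸ hyb,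
              Finset.mem_insert_of_mem (Finset.mem_insert_self _ _)⟩⟩
          by_cases htc : t = c
          · exact ⟨y, Finset.mem_inter.2 ⟨htc ▸ hyc,
              Finset.mem_insert_of_mem (Finset.mem_insert_self _ _)⟩⟩
          obtain ⟨q, hq⟩ := hH₂cov t ((hmemA₂ t).2 ⟨ht, hte, hta, htb, htc⟩)
          obtain ⟨hq1, hq2⟩ := Finset.mem_inter.1 hq
          exact ⟨q, Finset.mem_inter.2 ⟨hq1,
            Finset.mem_insert_of_mem (Finset.mem_insert_of_mem hq2)⟩⟩
        · have hcard1 := Finset.card_insert_le y H₂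
          have hcard2 := Finset.card_insert_le u (insert y H₂)
          omega
      · -- F4c : contraction
        set X' := (X.erase u).erase v with hX'def
        set A' := insert c (((A.erase e).erase a).erase b) with hA'def
        set G' := a ∩ b with hG'def
        have hX'sub : X' ⊆ X := (Finset.erase_subset _ _).trans (Finset.erase_subset _ _)
        have huX' : u ∉ X' := fun h => (Finset.mem_erase.1 (Finset.mem_erase.1 h).2).1 rfl
        have hvX' : v ∉ X' := fun h => (Finset.mem_erase.1 h).1 rfl
        have hmemX' : ∀ w ∈ X, w ≠ u → w ≠ v → w ∈ X' := by
          intro w hw hwu hwv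
          exact Finset.mem_erase.2 ⟨hwv, Finset.mem_erase.2 ⟨hwu, hw⟩⟩
        have hX'card : X.card = X'.card + 2 := by
          rw [hX'def, Finset.card_erase_of_mem (Finset.mem_erase.2 ⟨Ne.symm huv, hvX⟩),
            Finset.card_erase_of_mem huX]
          have h2c : 2 ≤ X.card := Finset.one_lt_card.2 ⟨u, huX, v, hvX, huv⟩
          omega
        have hc_ne : ∀ q ∈ c, q ≠ u ∧ q ≠ v :=
          fun q hq => ⟨fun h => hcu (h ▸ hq), fun h => hcv (h ▸ hq)⟩
        have hcab : c ⊆ a ∪ b := by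
          intro q hq
          rcases Finset.mem_union.1 hq with h | h
          · exact Finset.mem_union.2 (Or.inl (Finset.mem_erase.1 h).2)
          · exact Finset.mem_union.2 (Or.inr (Finset.mem_erase.1 h).2)
        have hcsubX : c ⊆ X := by
          intro q hq
          rcases Finset.mem_union.1 (hcab hq) with h | h
          exacts [(h1 a haA).1 h, (h1 b hbA).1 h]
        have hcX' : c ⊆ X' := fun q hq =>
          hmemX' q (hcsubX hq) (hc_ne q hq).1 (hc_ne q hq).2
        have hmemA' : ∀ t, t ∈ A' ↔ t = c ∨ (t ∈ A ∧ t ≠ e ∧ t ≠ a ∧ t ≠ b) := by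
          intro t
          rw [hA'def]
          simp only [Finset.mem_insert, Finset.mem_erase]
          tauto
        have hcA' : c ∈ A' := (hmemA' c).2 (Or.inl rfl)
        have hA'sets : ∀ t ∈ A', t ⊆ X' ∧ 2 ≤ t.card := by
          intro t ht
          rcases (hmemA' t).1 ht with h | ⟨htA, hte, hta, htb⟩
          · exact ⟨h ▸ hcX', h ▸ hc2⟩
          · refine ⟨fun q hq => hmemX' q ((h1 t htA).1 hq) ?_ ?_, (h1 t htA).2⟩
            · rintro rfl
              rcases mem_pair_filter hfu htA hq with h | h
              exacts [hte h, hta h]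
            · rintro rfl
              rcases mem_pair_filter hfv htA hq with h | h
              exacts [hte h, htb h]
        have hA'X' : ∀ t ∈ A', t ⊆ X' := fun t ht => (hA'sets t ht).1
        have hasub : a ⊆ insert u c := by
          intro q hq
          by_cases h : q = u
          · exact h ▸ Finset.mem_insert_self _ _
          · exact Finset.mem_insert_of_mem
              (Finset.mem_union.2 (Or.inl (Finset.mem_erase.2 ⟨h, hq⟩)))
        have hbsub : b ⊆ insert v c := by
          intro q hq
          by_cases h : q = v
          · exact h ▸ Finset.mem_insert_self _ _
          · exact Finset.mem_insert_of_mem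
              (Finset.mem_union.2 (Or.inr (Finset.mem_erase.2 ⟨h, hq⟩)))
        -- degrees
        have h2' : ∀ w ∈ X', w ∈ G' → dA A' w ≤ 1 := by
          intro w hw hwG'
          have hsub : A'.filter (fun t => w ∈ t) ⊆ {c} := by
            intro t ht
            obtain ⟨ht1, ht2⟩ := Finset.mem_filter.1 ht
            rcases (hmemA' t).1 ht1 with h | ⟨htA, hte, hta, htb⟩
            · exact Finset.mem_singleton.2 h
            · exfalso
              rcases mem_pair_filter (hfilw w hwG') htA ht2 with h | h
              exacts [hta h, htb h]
          calc (A'.filter (fun t => w ∈ t)).card ≤ ({c} : Finset (Finset α)).card :=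
                Finset.card_le_card hsub
            _ = 1 := Finset.card_singleton c
        have h3' : ∀ w ∈ X', w ∉ G' → dA A' w = 2 := by
          intro w hw hwG'
          have hwX : w ∈ X := hX'sub hw
          have hwu : w ≠ u := fun h => huX' (h ▸ hw)
          have hwv : w ≠ v := fun h => hvX' (h ▸ hw)
          by_cases hwc : w ∈ c
          · -- w in exactly one of a,b ; second set survives
            have hkey : ∃ t₂, t₂ ∈ A' ∧ t₂ ≠ c ∧ w ∈ t₂ ∧
                A'.filter (fun t => w ∈ t) = {c, t₂} := by
              have hone : (w ∈ a ∧ w ∉ b) ∨ (w ∈ b ∧ w ∉ a) := by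
                rcases Finset.mem_union.1 hwc with h | h
                · refine Or.inl ⟨(Finset.mem_erase.1 h).2, fun hb' => hwG' ?_⟩
                  exact Finset.mem_inter.2 ⟨(Finset.mem_erase.1 h).2, hb'⟩
                · by_cases ha' : w ∈ a
                  · exact absurd (Finset.mem_inter.2 ⟨ha', (Finset.mem_erase.1 h).2⟩) hwG'
                  · exact Or.inr ⟨(Finset.mem_erase.1 h).2, ha'⟩
              -- extract the other set of w besides (a or b)
              obtain ⟨s₀, t₀, hst₀, hs₀A, ht₀A, hws₀, hwt₀, hf₀⟩ := sets_of_point (hdeg w hwX)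
              rcases hone with ⟨hwa, hwnb⟩ | ⟨hwb, hwna⟩
              · have hamem : a = s₀ ∨ a = t₀ := mem_pair_filter hf₀ haA hwa
                obtain ⟨t₂, ht₂A, ht₂a, hwt₂, hf₂⟩ :
                    ∃ t₂, t₂ ∈ A ∧ t₂ ≠ a ∧ w ∈ t₂ ∧
                      A.filter (fun t => w ∈ t) = {a, t₂} := by
                  rcases hamem with h | h
                  · exact ⟨t₀, ht₀A, fun hh => hst₀ (h.symm.trans hh.symm).symm.symm, hwt₀,
                      by rw [hf₀, h]⟩
                  · exact ⟨s₀, hs₀A, fun hh => hst₀ (hh.trans h), hws₀,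
                      by rw [hf₀, h, Finset.pair_comm]⟩
                have ht₂e : t₂ ≠ e := by
                  rintro rfl
                  rw [heuv] at hwt₂
                  rcases Finset.mem_insert.1 hwt₂ with h | h
                  exacts [hwu h, hwv (Finset.mem_singleton.1 h)]
                have ht₂b : t₂ ≠ b := fun h => hwnb (h ▸ hwt₂)
                have ht₂A' : t₂ ∈ A' := (hmemA' t₂).2 (Or.inr ⟨ht₂A, ht₂e, ht₂a, ht₂b⟩)
                have ht₂c : t₂ ≠ c := fun h => hF4b (h ▸ ht₂A)
                refine ⟨t₂, ht₂A', ht₂c, hwt₂, ?_⟩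
                apply Finset.Subset.antisymm
                · intro t ht
                  obtain ⟨ht1, ht2⟩ := Finset.mem_filter.1 ht
                  rcases (hmemA' t).1 ht1 with h | ⟨htA, hte, hta, htb⟩
                  · exact h ▸ Finset.mem_insert_self _ _
                  · rcases mem_pair_filter hf₂ htA ht2 with h | h
                    exacts [absurd h hta, Finset.mem_insert_of_mem (h ▸ Finset.mem_singleton_self _)]
                · intro t ht
                  rcases Finset.mem_insert.1 ht with h | h
                  · exact h ▸ Finset.mem_filter.2 ⟨hcA', hwc⟩
                  · exact (Finset.mem_singleton.1 h) ▸ Finset.mem_filter.2 ⟨ht₂A', hwt₂⟩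
              · have hbmem : b = s₀ ∨ b = t₀ := mem_pair_filter hf₀ hbA hwb
                obtain ⟨t₂, ht₂A, ht₂b, hwt₂, hf₂⟩ :
                    ∃ t₂, t₂ ∈ A ∧ t₂ ≠ b ∧ w ∈ t₂ ∧
                      A.filter (fun t => w ∈ t) = {b, t₂} := by
                  rcases hbmem with h | h
                  · exact ⟨t₀, ht₀A, fun hh => hst₀ (h.symm.trans hh.symm).symm.symm, hwt₀,
                      by rw [hf₀, h]⟩
                  · exact ⟨s₀, hs₀A, fun hh => hst₀ (hh.trans h), hws₀,
                      by rw [hf₀, h, Finset.pair_comm]⟩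
                have ht₂e : t₂ ≠ e := by
                  rintro rfl
                  rw [heuv] at hwt₂
                  rcases Finset.mem_insert.1 hwt₂ with h | h
                  exacts [hwu h, hwv (Finset.mem_singleton.1 h)]
                have ht₂a : t₂ ≠ a := fun h => hwna (h ▸ hwt₂)
                have ht₂A' : t₂ ∈ A' := (hmemA' t₂).2 (Or.inr ⟨ht₂A, ht₂e, ht₂a, ht₂b⟩)
                have ht₂c : t₂ ≠ c := fun h => hF4b (h ▸ ht₂A)
                refine ⟨t₂, ht₂A', ht₂c, hwt₂, ?_⟩
                apply Finset.Subset.antisymm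
                · intro t ht
                  obtain ⟨ht1, ht2⟩ := Finset.mem_filter.1 ht
                  rcases (hmemA' t).1 ht1 with h | ⟨htA, hte, hta, htb⟩
                  · exact h ▸ Finset.mem_insert_self _ _
                  · rcases mem_pair_filter hf₂ htA ht2 with h | h
                    exacts [absurd h htb, Finset.mem_insert_of_mem (h ▸ Finset.mem_singleton_self _)]
                · intro t ht
                  rcases Finset.mem_insert.1 ht with h | h
                  · exact h ▸ Finset.mem_filter.2 ⟨hcA', hwc⟩
                  · exact (Finset.mem_singleton.1 h) ▸ Finset.mem_filter.2 ⟨ht₂A', hwt₂⟩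
            obtain ⟨t₂, _, ht₂c, _, hfeq⟩ := hkey
            unfold dA
            rw [hfeq, Finset.card_pair (Ne.symm ht₂c)]
          · -- w outside c : filters agree
            have heqf : A'.filter (fun t => w ∈ t) = A.filter (fun t => w ∈ t) := by
              apply Finset.Subset.antisymm
              · intro t ht
                obtain ⟨ht1, ht2⟩ := Finset.mem_filter.1 ht
                rcases (hmemA' t).1 ht1 with h | ⟨htA, _, _, _⟩
                · exact absurd (h ▸ ht2) hwc
                · exact Finset.mem_filter.2 ⟨htA, ht2⟩
              · intro t ht
                obtain ⟨ht1, ht2⟩ := Finset.mem_filter.1 ht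
                refine Finset.mem_filter.2 ⟨(hmemA' t).2 (Or.inr ⟨ht1, ?_, ?_, ?_⟩), ht2⟩
                · rintro rfl
                  rw [heuv] at ht2
                  rcases Finset.mem_insert.1 ht2 with h | h
                  exacts [hwu h, hwv (Finset.mem_singleton.1 h)]
                · rintro rfl
                  exact hwc (Finset.mem_union.2 (Or.inl (Finset.mem_erase.2 ⟨hwu, ht2⟩)))
                · rintro rfl
                  exact hwc (Finset.mem_union.2 (Or.inr (Finset.mem_erase.2 ⟨hwv, ht2⟩)))
            unfold dA
            rw [heqf]
            exact hdeg w hwX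
        have hAX : ∀ t ∈ A, t ⊆ X := fun t ht => (h1 t ht).1
        have h4' : CompCond X' A' G' := by
          intro w hw
          set K := conn X' A' w with hKdef
          have hwX : w ∈ X := hX'sub hw
          have hwu : w ≠ u := fun h => huX' (h ▸ hw)
          have hwv : w ≠ v := fun h => hvX' (h ▸ hw)
          have hKX' : K ⊆ X' := conn_subset _ _ _
          have hKcl : IsClosed' A' K := conn_closed hA'X'
          have hwK : w ∈ K := mem_conn_self _ hw
          by_cases hGK : (G' ∩ K).Nonempty
          · exact Or.inl hGK
          have hGdisj : ∀ g ∈ G', g ∉ K := fun g hg hgK => hGK ⟨g, Finset.mem_inter.2 ⟨hg, hgK⟩⟩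
          by_cases hcK : (c ∩ K).Nonempty
          · -- component absorbs the merged set
            have hcsubK : c ⊆ K := hKcl c hcA' hcK
            have habdisj : a ∩ b = ∅ := by
              by_contra hne
              obtain ⟨z, hzab⟩ := Finset.nonempty_iff_ne_empty.2 hne
              have hzc : z ∈ c := by
                refine Finset.mem_union.2 (Or.inl (Finset.mem_erase.2
                  ⟨fun h => hub (h ▸ (Finset.mem_inter.1 hzab).2), (Finset.mem_inter.1 hzab).1⟩))
              exact hGdisj z hzab (hcsubK hzc)
            set Kx := conn X A w with hKxdef
            have hKxcl : IsClosed' A Kx := conn_closed hAX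
            have hwKx : w ∈ Kx := mem_conn_self _ hwX
            have hpull : ∀ p ∈ c, p ∈ Kx → a ⊆ Kx ∧ b ⊆ Kx ∧ u ∈ Kx ∧ v ∈ Kx := by
              intro p hp hpKx
              rcases Finset.mem_union.1 hp with h | h
              · have haKx : a ⊆ Kx := hKxcl a haA
                  ⟨p, Finset.mem_inter.2 ⟨(Finset.mem_erase.1 h).2, hpKx⟩⟩
                have huKx : u ∈ Kx := haKx hua
                have heKx : e ⊆ Kx := hKxcl e he ⟨u, Finset.mem_inter.2 ⟨hue, huKx⟩⟩
                have hvKx : v ∈ Kx := heKx hve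
                exact ⟨haKx, hKxcl b hbA ⟨v, Finset.mem_inter.2 ⟨hvb, hvKx⟩⟩, huKx, hvKx⟩
              · have hbKx : b ⊆ Kx := hKxcl b hbA
                  ⟨p, Finset.mem_inter.2 ⟨(Finset.mem_erase.1 h).2, hpKx⟩⟩
                have hvKx : v ∈ Kx := hbKx hvb
                have heKx : e ⊆ Kx := hKxcl e he ⟨v, Finset.mem_inter.2 ⟨hve, hvKx⟩⟩
                have huKx : u ∈ Kx := heKx hue
                exact ⟨hKxcl a haA ⟨u, Finset.mem_inter.2 ⟨hua, huKx⟩⟩, hbKx, huKx, hvKx⟩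
            have hclaim1 : Kx ⊆ insert u (insert v K) := by
              refine conn_min ?_ (Finset.mem_insert_of_mem (Finset.mem_insert_of_mem hwK)) ?_
              · intro q hq
                rcases Finset.mem_insert.1 hq with h | h
                · exact h ▸ huX
                rcases Finset.mem_insert.1 h with h' | h'
                · exact h' ▸ hvX
                · exact hX'sub (hKX' h')
              · intro t ht hmeet
                by_cases hte : t = e
                · subst hte
                  rw [heuv]
                  intro q hq
                  rcases Finset.mem_insert.1 hq with h | h
                  · exact h ▸ Finset.mem_insert_self _ _
                  · exact (Finset.mem_singleton.1 h) ▸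
                      Finset.mem_insert_of_mem (Finset.mem_insert_self _ _)
                by_cases hta : t = a
                · subst hta
                  refine hasub.trans ?_
                  intro q hq
                  rcases Finset.mem_insert.1 hq with h | h
                  · exact h ▸ Finset.mem_insert_self _ _
                  · exact Finset.mem_insert_of_mem (Finset.mem_insert_of_mem (hcsubK h))
                by_cases htb : t = b
                · subst htb
                  refine hbsub.trans ?_
                  intro q hq
                  rcases Finset.mem_insert.1 hq with h | h
                  · exact h ▸ Finset.mem_insert_of_mem (Finset.mem_insert_self _ _)
                  · exact Finset.mem_insert_of_mem (Finset.mem_insert_of_mem (hcsubK h))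
                -- t survives in A'
                have htA' : t ∈ A' := (hmemA' t).2 (Or.inr ⟨ht, hte, hta, htb⟩)
                obtain ⟨q, hq⟩ := hmeet
                obtain ⟨hqt, hqC⟩ := Finset.mem_inter.1 hq
                have hqu : q ≠ u := by
                  rintro rfl
                  rcases mem_pair_filter hfu ht hqt with h | h
                  exacts [hte h, hta h]
                have hqv : q ≠ v := by
                  rintro rfl
                  rcases mem_pair_filter hfv ht hqt with h | h
                  exacts [hte h, htb h]
                have hqK : q ∈ K := by
                  rcases Finset.mem_insert.1 hqC with h | h
                  · exact absurd h hqu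
                  rcases Finset.mem_insert.1 h with h' | h'
                  · exact absurd h' hqv
                  · exact h'
                have : t ⊆ K := hKcl t htA' ⟨q, Finset.mem_inter.2 ⟨hqt, hqK⟩⟩
                exact fun r hr => Finset.mem_insert_of_mem (Finset.mem_insert_of_mem (this hr))
            have hclaim2 : K ⊆ (Kx.erase u).erase v := by
              refine conn_min ?_ ?_ ?_
              · intro q hq
                have hq1 := Finset.mem_erase.1 hq
                have hq2 := Finset.mem_erase.1 hq1.2
                exact hmemX' q (conn_subset _ _ _ hq2.2) hq2.1 hq1.1
              · exact Finset.mem_erase.2 ⟨hwv, Finset.mem_erase.2 ⟨hwu, hwKx⟩⟩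
              · intro t ht hmeet
                obtain ⟨q, hq⟩ := hmeet
                obtain ⟨hqt, hqC⟩ := Finset.mem_inter.1 hq
                have hqKx : q ∈ Kx := Finset.mem_of_mem_erase (Finset.mem_of_mem_erase hqC)
                by_cases htc : t = c
                · subst htc
                  obtain ⟨haKx, hbKx, _, _⟩ := hpull q hqt hqKx
                  intro r hr
                  have hrKx : r ∈ Kx := by
                    rcases Finset.mem_union.1 (hcab hr) with h | h
                    exacts [haKx h, hbKx h]
                  exact Finset.mem_erase.2 ⟨(hc_ne r hr).2,
                    Finset.mem_erase.2 ⟨(hc_ne r hr).1, hrKx⟩⟩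
                · have htA : t ∈ A := by
                    rcases (hmemA' t).1 ht with h | h
                    exacts [absurd h htc, h.1]
                  have htKx : t ⊆ Kx := hKxcl t htA ⟨q, Finset.mem_inter.2 ⟨hqt, hqKx⟩⟩
                  have htX' : t ⊆ X' := hA'X' t ht
                  intro r hr
                  refine Finset.mem_erase.2 ⟨fun h => hvX' (h ▸ htX' hr),
                    Finset.mem_erase.2 ⟨fun h => huX' (h ▸ htX' hr), htKx hr⟩⟩
            obtain ⟨p₀, hp₀⟩ := hcK
            obtain ⟨hp₀c, hp₀K⟩ := Finset.mem_inter.1 hp₀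
            have hp₀Kx : p₀ ∈ Kx :=
              Finset.mem_of_mem_erase (Finset.mem_of_mem_erase (hclaim2 hp₀K))
            obtain ⟨haKx, hbKx, huKx, hvKx⟩ := hpull p₀ hp₀c hp₀Kx
            have hKxeq : Kx = insert u (insert v K) := by
              apply Finset.Subset.antisymm hclaim1
              intro q hq
              rcases Finset.mem_insert.1 hq with h | h
              · exact h ▸ huKx
              rcases Finset.mem_insert.1 h with h' | h'
              · exact h' ▸ hvKx
              · exact Finset.mem_of_mem_erase (Finset.mem_of_mem_erase (hclaim2 h'))
            have huK : u ∉ K := fun h => huX' (hKX' h)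
            have hvK : v ∉ K := fun h => hvX' (hKX' h)
            have hKxcard : Kx.card = K.card + 2 := by
              rw [hKxeq, Finset.card_insert_of_notMem (by
                  simp only [Finset.mem_insert]
                  push_neg
                  exact ⟨huv, huK⟩),
                Finset.card_insert_of_notMem hvK]
            have hKeq2 : K = (Kx.erase u).erase v := by
              apply Finset.Subset.antisymm hclaim2
              intro q hq
              have hq1 := Finset.mem_erase.1 hq
              have hq2 := Finset.mem_erase.1 hq1.2
              have : q ∈ insert u (insert v K) := hKxeq ▸ hq2.2
              rcases Finset.mem_insert.1 this with h | h
              · exact absurd h hq2.1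
              rcases Finset.mem_insert.1 h with h' | h'
              · exact absurd h' hq1.1
              · exact h'
            rcases h4 w hwX with hGc | hbig | heven
            · exfalso
              obtain ⟨g, hg⟩ := hGc
              obtain ⟨hg1, hg2⟩ := Finset.mem_inter.1 hg
              exact hGX g (conn_subset _ _ _ hg2) hg1
            · obtain ⟨t, htA, htsub, htcard⟩ := hbig
              have hcbig : 3 ≤ c.card ∨ (t ≠ e ∧ t ≠ a ∧ t ≠ b) := by
                by_cases hte : t = e
                · rw [hte, hec] at htcard; omega
                by_cases hta : t = a
                · left
                  have hcc : c.card = (a.erase u).card + (b.erase v).card := by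
                    rw [hcdef]
                    refine Finset.card_union_of_disjoint ?_
                    refine Finset.disjoint_left.2 fun q hqa hqb => ?_
                    have : q ∈ a ∩ b := Finset.mem_inter.2
                      ⟨(Finset.mem_erase.1 hqa).2, (Finset.mem_erase.1 hqb).2⟩
                    rw [habdisj] at this
                    exact absurd this (Finset.notMem_empty q)
                  have h1c := Finset.card_erase_of_mem hua
                  have h2c := Finset.card_erase_of_mem hvb
                  have h3c := (h1 b hbA).2
                  have h4c : 3 ≤ a.card := hta ▸ htcard
                  have h5c : 1 ≤ a.card := by omega
                  omega
                by_cases htb : t = b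
                · left
                  have hcc : c.card = (a.erase u).card + (b.erase v).card := by
                    rw [hcdef]
                    refine Finset.card_union_of_disjoint ?_
                    refine Finset.disjoint_left.2 fun q hqa hqb => ?_
                    have : q ∈ a ∩ b := Finset.mem_inter.2
                      ⟨(Finset.mem_erase.1 hqa).2, (Finset.mem_erase.1 hqb).2⟩
                    rw [habdisj] at this
                    exact absurd this (Finset.notMem_empty q)
                  have h1c := Finset.card_erase_of_mem hua
                  have h2c := Finset.card_erase_of_mem hvb
                  have h3c := (h1 a haA).2
                  have h4c : 3 ≤ b.card := htb ▸ htcard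
                  omega
                · exact Or.inr ⟨hte, hta, htb⟩
              rcases hcbig with h | ⟨hte, hta, htb⟩
              · exact Or.inr (Or.inl ⟨c, hcA', hcsubK, h⟩)
              · refine Or.inr (Or.inl ⟨t, (hmemA' t).2 (Or.inr ⟨htA, hte, hta, htb⟩), ?_, htcard⟩)
                rw [hKeq2]
                intro r hr
                have hrX' : r ∈ X' := hA'X' t ((hmemA' t).2 (Or.inr ⟨htA, hte, hta, htb⟩)) hr
                refine Finset.mem_erase.2 ⟨fun h => hvX' (h ▸ hrX'),
                  Finset.mem_erase.2 ⟨fun h => huX' (h ▸ hrX'), htsub hr⟩⟩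
            · right; right
              rw [hKxcard] at heven
              obtain ⟨k, hk⟩ := heven
              exact ⟨k - 1, by omega⟩
          · -- component avoids c entirely
            have hKclX : IsClosed' A K := by
              intro t ht hmeet
              obtain ⟨q, hq⟩ := hmeet
              obtain ⟨hqt, hqK⟩ := Finset.mem_inter.1 hq
              have hqX' : q ∈ X' := hKX' hqK
              have hqu : q ≠ u := fun h => huX' (h ▸ hqX')
              have hqv : q ≠ v := fun h => hvX' (h ▸ hqX')
              by_cases hte : t = e
              · exfalso
                rw [hte, heuv] at hqt
                rcases Finset.mem_insert.1 hqt with h | h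
                exacts [hqu h, hqv (Finset.mem_singleton.1 h)]
              by_cases hta : t = a
              · exfalso
                have : q ∈ c := Finset.mem_union.2 (Or.inl (Finset.mem_erase.2 ⟨hqu, hta ▸ hqt⟩))
                exact hcK ⟨q, Finset.mem_inter.2 ⟨this, hqK⟩⟩
              by_cases htb : t = b
              · exfalso
                have : q ∈ c := Finset.mem_union.2 (Or.inr (Finset.mem_erase.2 ⟨hqv, htb ▸ hqt⟩))
                exact hcK ⟨q, Finset.mem_inter.2 ⟨this, hqK⟩⟩
              · exact hKcl t ((hmemA' t).2 (Or.inr ⟨ht, hte, hta, htb⟩))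
                  ⟨q, Finset.mem_inter.2 ⟨hqt, hqK⟩⟩
            have hKxK : conn X A w ⊆ K := conn_min (hKX'.trans hX'sub) hwK hKclX
            have hKKx : K ⊆ conn X A w := by
              refine conn_min (hKxK.trans hKX') (mem_conn_self _ hwX) ?_
              intro t ht hmeet
              by_cases htc : t = c
              · exfalso
                obtain ⟨q, hq⟩ := hmeet
                obtain ⟨hqt, hqKx⟩ := Finset.mem_inter.1 hq
                exact hcK ⟨q, Finset.mem_inter.2 ⟨htc ▸ hqt, hKxK hqKx⟩⟩
              · have htA : t ∈ A := by
                  rcases (hmemA' t).1 ht with h | h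
                  exacts [absurd h htc, h.1]
                exact conn_closed hAX t htA hmeet
            have hKeq : K = conn X A w := Finset.Subset.antisymm hKKx hKxK
            rcases h4 w hwX with hGc | hbig | heven
            · exfalso
              obtain ⟨g, hg⟩ := hGc
              obtain ⟨hg1, hg2⟩ := Finset.mem_inter.1 hg
              exact hGX g (conn_subset _ _ _ hg2) hg1
            · obtain ⟨t, htA, htsub, htcard⟩ := hbig
              have htK : t ⊆ K := hKeq ▸ htsub
              have hte : t ≠ e := by
                rintro rfl
                exact huX' (hKX' (htK hue))
              have hta : t ≠ a := by
                rintro rfl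
                exact huX' (hKX' (htK hua))
              have htb : t ≠ b := by
                rintro rfl
                exact hvX' (hKX' (htK hvb))
              exact Or.inr (Or.inl ⟨t, (hmemA' t).2 (Or.inr ⟨htA, hte, hta, htb⟩), htK, htcard⟩)
            · exact Or.inr (Or.inr (hKeq ▸ heven))
        obtain ⟨H', hH'sub, hH'cov, hH'card⟩ := ih X' A' G'
          (by omega)
          hA'sets h2' h3' h4'
        obtain ⟨p, hp⟩ := hH'cov c hcA'
        obtain ⟨hpc, hpH'⟩ := Finset.mem_inter.1 hp
        rcases Finset.mem_union.1 hpc with hpa | hpb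
        · -- p covers a ; add v to kill e and b
          refine ⟨insert v H', ?_, ?_, ?_⟩
          · intro q hq
            rcases Finset.mem_insert.1 hq with h | h
            exacts [h ▸ hvX, hX'sub (hH'sub h)]
          · intro t ht
            by_cases hte : t = e
            · exact ⟨v, Finset.mem_inter.2 ⟨hte ▸ hve, Finset.mem_insert_self _ _⟩⟩
            by_cases hta : t = a
            · exact ⟨p, Finset.mem_inter.2 ⟨hta ▸ (Finset.mem_erase.1 hpa).2,
                Finset.mem_insert_of_mem hpH'⟩⟩
            by_cases htb : t = b
            · exact ⟨v, Finset.mem_inter.2 ⟨htb ▸ hvb, Finset.mem_insert_self _ _⟩⟩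
            obtain ⟨q, hq⟩ := hH'cov t ((hmemA' t).2 (Or.inr ⟨ht, hte, hta, htb⟩))
            obtain ⟨hq1, hq2⟩ := Finset.mem_inter.1 hq
            exact ⟨q, Finset.mem_inter.2 ⟨hq1, Finset.mem_insert_of_mem hq2⟩⟩
          · have := Finset.card_insert_le v H'
            omega
        · -- p covers b ; add u to kill e and a
          refine ⟨insert u H', ?_, ?_, ?_⟩
          · intro q hq
            rcases Finset.mem_insert.1 hq with h | h
            exacts [h ▸ huX, hX'sub (hH'sub h)]
          · intro t ht
            by_cases hte : t = e
            · exact ⟨u, Finset.mem_inter.2 ⟨hte ▸ hue, Finset.mem_insert_self _ _⟩⟩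
            by_cases hta : t = a
            · exact ⟨u, Finset.mem_inter.2 ⟨hta ▸ hua, Finset.mem_insert_self _ _⟩⟩
            by_cases htb : t = b
            · exact ⟨p, Finset.mem_inter.2 ⟨htb ▸ (Finset.mem_erase.1 hpb).2,
                Finset.mem_insert_of_mem hpH'⟩⟩
            obtain ⟨q, hq⟩ := hH'cov t ((hmemA' t).2 (Or.inr ⟨ht, hte, hta, htb⟩))
            obtain ⟨hq1, hq2⟩ := Finset.mem_inter.1 hq
            exact ⟨q, Finset.mem_inter.2 ⟨hq1, Finset.mem_insert_of_mem hq2⟩⟩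
          · have := Finset.card_insert_le u H'
            omega
    -- F5: all sets have size ≥ 3 : maximal matching argument
    have hbig3 : ∀ a ∈ A, 3 ≤ a.card := by
      intro a ha
      have := (h1 a ha).2
      rcases Nat.lt_or_ge a.card 3 with h | h
      · exfalso
        exact hF4 ⟨a, ha, by omega⟩
      · exact h
    classical
    set cands := A.powerset.filter
      (fun P => P.card = 2 ∧ ∃ x ∈ P, ∃ y ∈ P, x ≠ y ∧ (x ∩ y).Nonempty) with hcands
    set Ms := cands.powerset.filter
      (fun M => ∀ P ∈ M, ∀ Q ∈ M, P ≠ Q → Disjoint P Q) with hMs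
    have hMsne : Ms.Nonempty := by
      refine ⟨∅, Finset.mem_filter.2 ⟨Finset.empty_mem_powerset _, ?_⟩⟩
      intro P hP
      exact absurd hP (Finset.notMem_empty P)
    obtain ⟨M, hMmem, hMmax⟩ := Finset.exists_max_image Ms Finset.card hMsne
    obtain ⟨hMc, hMdisj⟩ := Finset.mem_filter.1 hMmem
    have hMcands : ∀ P ∈ M, P ∈ cands := fun P hP => (Finset.mem_powerset.1 hMc) hP
    set supp := M.sup id with hsupp
    have hsuppA : supp ⊆ A := by
      intro a ha
      obtain ⟨P, hP, haP⟩ := Finset.mem_sup.1 ha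
      exact Finset.mem_powerset.1 (Finset.mem_filter.1 (hMcands P hP)).1 haP
    have hsuppcard : supp.card = 2 * M.card := by
      have hbu : (M.biUnion id).card = ∑ P ∈ M, P.card :=
        Finset.card_biUnion (fun P hP Q hQ hPQ => hMdisj P hP Q hQ hPQ)
      have hc2 : ∀ P ∈ M, P.card = 2 :=
        fun P hP => (Finset.mem_filter.1 (hMcands P hP)).2.1
      rw [hsupp, Finset.sup_eq_biUnion, hbu, Finset.sum_congr rfl hc2,
        Finset.sum_const, smul_eq_mul, mul_comm]
    set U := A \ supp with hU
    have hUdisj : ∀ x ∈ U, ∀ y ∈ U, x ≠ y → x ∩ y = ∅ := by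
      intro x hx y hy hxy
      by_contra hne
      obtain ⟨z, hz⟩ := Finset.nonempty_iff_ne_empty.2 hne
      have hxA : x ∈ A := (Finset.mem_sdiff.1 hx).1
      have hyA : y ∈ A := (Finset.mem_sdiff.1 hy).1
      have hxs : x ∉ supp := (Finset.mem_sdiff.1 hx).2
      have hys : y ∉ supp := (Finset.mem_sdiff.1 hy).2
      have hPc : ({x, y} : Finset (Finset α)) ∈ cands := by
        refine Finset.mem_filter.2 ⟨Finset.mem_powerset.2 ?_, Finset.card_pair hxy,
          x, Finset.mem_insert_self _ _, y,
          Finset.mem_insert_of_mem (Finset.mem_singleton_self _), hxy, ⟨z, hz⟩⟩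
        intro t ht
        rcases Finset.mem_insert.1 ht with h | h
        exacts [h ▸ hxA, (Finset.mem_singleton.1 h) ▸ hyA]
      have hPM : ({x, y} : Finset (Finset α)) ∉ M := by
        intro hP
        exact hxs (Finset.mem_sup.2 ⟨_, hP, Finset.mem_insert_self _ _⟩)
      have hins : insert ({x, y} : Finset (Finset α)) M ∈ Ms := by
        refine Finset.mem_filter.2 ⟨Finset.mem_powerset.2 ?_, ?_⟩
        · intro P hP
          rcases Finset.mem_insert.1 hP with h | h
          exacts [h ▸ hPc, hMcands P h]
        · intro P hP Q hQ hPQ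
          have hdxy : ∀ R ∈ M, Disjoint ({x, y} : Finset (Finset α)) R := by
            intro R hR
            rw [Finset.disjoint_left]
            intro s hs hsR
            have hssupp : s ∈ supp := Finset.mem_sup.2 ⟨R, hR, hsR⟩
            rcases Finset.mem_insert.1 hs with h | h
            exacts [hxs (h ▸ hssupp), hys ((Finset.mem_singleton.1 h) ▸ hssupp)]
          rcases Finset.mem_insert.1 hP with hP' | hP' <;>
            rcases Finset.mem_insert.1 hQ with hQ' | hQ'
          · exact absurd (hP'.trans hQ'.symm) hPQ
          · exact hP' ▸ hdxy Q hQ'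
          · exact hQ' ▸ (hdxy P hP').symm
          · exact hMdisj P hP' Q hQ' hPQ
      have := hMmax _ hins
      rw [Finset.card_insert_of_notMem hPM] at this
      omega
    -- witness points
    have hPspec : ∀ P ∈ M, ∃ z, z ∈ X ∧ ∀ t ∈ P, z ∈ t := by
      intro P hP
      obtain ⟨hPsub, hP2, x, hx, y, hy, hxy, z, hz⟩ := Finset.mem_filter.1 (hMcands P hP)
      have hPxy : P = {x, y} := by
        have hsub : ({x, y} : Finset (Finset α)) ⊆ P := by
          intro t ht
          rcases Finset.mem_insert.1 ht with h | h
          exacts [h ▸ hx, (Finset.mem_singleton.1 h) ▸ hy]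
        refine (Finset.eq_of_subset_of_card_le hsub ?_).symm
        rw [Finset.card_pair hxy, hP2]
      obtain ⟨hzx, hzy⟩ := Finset.mem_inter.1 hz
      refine ⟨z, (h1 x ((Finset.mem_powerset.1 hPsub) hx)).1 hzx, fun t ht => ?_⟩
      rw [hPxy] at ht
      rcases Finset.mem_insert.1 ht with h | h
      exacts [h ▸ hzx, (Finset.mem_singleton.1 h) ▸ hzy]
    set f : {P // P ∈ M} → α := fun P => (hPspec P.1 P.2).choose with hf
    have hfspec : ∀ (P : {P // P ∈ M}), f P ∈ X ∧ ∀ t ∈ P.1, f P ∈ t :=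
      fun P => (hPspec P.1 P.2).choose_spec
    have hcard2' : ∀ P ∈ M, ∃ x ∈ P, ∃ y ∈ P, x ≠ y :=
      fun P hP => Finset.one_lt_card.1 (by
        rw [(Finset.mem_filter.1 (hMcands P hP)).2.1]; omega)
    have hfinj : Function.Injective f := by
      intro P Q hPQ
      by_contra hne
      have hne' : P.1 ≠ Q.1 := fun h => hne (Subtype.ext h)
      obtain ⟨x, hx, y, hy, hxy⟩ := hcard2' P.1 P.2
      obtain ⟨x', hx', y', hy', hxy'⟩ := hcard2' Q.1 Q.2
      have hdisjPQ := hMdisj P.1 P.2 Q.1 Q.2 hne'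
      set z := f P with hz
      have hzx : z ∈ x := (hfspec P).2 x hx
      have hzy : z ∈ y := (hfspec P).2 y hy
      have hzx' : z ∈ x' := hPQ ▸ (hfspec Q).2 x' hx'
      have hsub : ({x, y, x'} : Finset (Finset α)) ⊆ A.filter (fun t => z ∈ t) := by
        intro t ht
        have htA : t ∈ A := by
          rcases Finset.mem_insert.1 ht with h | h
          · exact h ▸ hsuppA (Finset.mem_sup.2 ⟨P.1, P.2, hx⟩)
          rcases Finset.mem_insert.1 h with h' | h'
          · exact h' ▸ hsuppA (Finset.mem_sup.2 ⟨P.1, P.2, hy⟩)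
          · exact (Finset.mem_singleton.1 h') ▸ hsuppA (Finset.mem_sup.2 ⟨Q.1, Q.2, hx'⟩)
        refine Finset.mem_filter.2 ⟨htA, ?_⟩
        rcases Finset.mem_insert.1 ht with h | h
        · exact h ▸ hzx
        rcases Finset.mem_insert.1 h with h' | h'
        · exact h' ▸ hzy
        · exact (Finset.mem_singleton.1 h') ▸ hzx'
      have hx'nx : x' ≠ x := fun h => (Finset.disjoint_left.1 hdisjPQ hx) (h ▸ hx')
      have hx'ny : x' ≠ y := fun h => (Finset.disjoint_left.1 hdisjPQ hy) (h ▸ hx')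
      have hc3 : 3 ≤ (A.filter (fun t => z ∈ t)).card := by
        refine le_trans ?_ (Finset.card_le_card hsub)
        rw [Finset.card_insert_of_notMem (by
            simp only [Finset.mem_insert, Finset.mem_singleton]
            push_neg
            exact ⟨hxy, fun h => hx'nx h.symm⟩),
          Finset.card_insert_of_notMem (by
            simp only [Finset.mem_singleton]
            exact fun h => hx'ny h.symm), Finset.card_singleton]
      have := hdeg z (hfspec P).1
      unfold dA at this
      omega
    set Z := Finset.image f M.attach with hZ
    have hZcard : Z.card = M.card := by
      rw [hZ, Finset.card_image_of_injective _ hfinj, Finset.card_attach]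
    set W := U.biUnion id with hW
    have hUdisj' : ∀ x ∈ U, ∀ y ∈ U, x ≠ y → Disjoint (id x) (id y) := by
      intro x hx y hy hxy
      rw [Finset.disjoint_left]
      intro q hq hq'
      have : q ∈ x ∩ y := Finset.mem_inter.2 ⟨hq, hq'⟩
      rw [hUdisj x hx y hy hxy] at this
      exact absurd this (Finset.notMem_empty q)
    have hWcard : 3 * U.card ≤ W.card := by
      rw [hW, Finset.card_biUnion hUdisj']
      calc 3 * U.card = ∑ _u ∈ U, 3 := by rw [Finset.sum_const, smul_eq_mul, mul_comm]
        _ ≤ ∑ u ∈ U, (id u).card :=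
          Finset.sum_le_sum (fun u hu => hbig3 u (Finset.mem_sdiff.1 hu).1)
    have hZW : Disjoint Z W := by
      rw [Finset.disjoint_left]
      intro z hzZ hzW
      obtain ⟨P, _, hfP⟩ := Finset.mem_image.1 hzZ
      obtain ⟨u, hu, hzu⟩ := Finset.mem_biUnion.1 hzW
      obtain ⟨x, hx, y, hy, hxy⟩ := hcard2' P.1 P.2
      have hzx : z ∈ x := hfP ▸ (hfspec P).2 x hx
      have hzy : z ∈ y := hfP ▸ (hfspec P).2 y hy
      have hxA : x ∈ A := hsuppA (Finset.mem_sup.2 ⟨P.1, P.2, hx⟩)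
      have hyA : y ∈ A := hsuppA (Finset.mem_sup.2 ⟨P.1, P.2, hy⟩)
      have hux : u ≠ x := fun h => (Finset.mem_sdiff.1 hu).2
        (h ▸ Finset.mem_sup.2 ⟨P.1, P.2, hx⟩)
      have huy : u ≠ y := fun h => (Finset.mem_sdiff.1 hu).2
        (h ▸ Finset.mem_sup.2 ⟨P.1, P.2, hy⟩)
      have hsub : ({x, y, u} : Finset (Finset α)) ⊆ A.filter (fun t => z ∈ t) := by
        intro t ht
        rcases Finset.mem_insert.1 ht with h | h
        · exact h ▸ Finset.mem_filter.2 ⟨hxA, hzx⟩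
        rcases Finset.mem_insert.1 h with h' | h'
        · exact h' ▸ Finset.mem_filter.2 ⟨hyA, hzy⟩
        · exact (Finset.mem_singleton.1 h') ▸
            Finset.mem_filter.2 ⟨(Finset.mem_sdiff.1 hu).1, hzu⟩
      have hc3 : 3 ≤ (A.filter (fun t => z ∈ t)).card := by
        refine le_trans ?_ (Finset.card_le_card hsub)
        rw [Finset.card_insert_of_notMem (by
            simp only [Finset.mem_insert, Finset.mem_singleton]
            push_neg
            exact ⟨hxy, fun h => hux h.symm⟩),
          Finset.card_insert_of_notMem (by
            simp only [Finset.mem_singleton]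
            exact fun h => huy h.symm), Finset.card_singleton]
      have := hdeg z (hfP ▸ (hfspec P).1)
      unfold dA at this
      omega
    have hZX : Z ⊆ X := by
      intro z hz
      obtain ⟨P, _, hfP⟩ := Finset.mem_image.1 hz
      exact hfP ▸ (hfspec P).1
    have hWX : W ⊆ X := by
      intro z hz
      obtain ⟨u, hu, hzu⟩ := Finset.mem_biUnion.1 hz
      exact (h1 u (Finset.mem_sdiff.1 hu).1).1 hzu
    have hZWX : M.card + 3 * U.card ≤ X.card := by
      calc M.card + 3 * U.card ≤ Z.card + W.card := by omega
        _ = (Z ∪ W).card := (Finset.card_union_of_disjoint hZW).symm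
        _ ≤ X.card := Finset.card_le_card (Finset.union_subset hZX hWX)
    have hsuppAle : supp.card ≤ A.card := Finset.card_le_card hsuppA
    have hUc : U.card = A.card - supp.card := Finset.card_sdiff_of_subset hsuppA
    have hsum : 3 * A.card ≤ 2 * X.card := by
      have h2x : ∑ a ∈ A, a.card = 2 * X.card := by
        rw [sum_card_eq_sum_deg (fun a ha => (h1 a ha).1)]
        calc ∑ z ∈ X, dA A z = ∑ _z ∈ X, 2 := Finset.sum_congr rfl hdeg
          _ = 2 * X.card := by rw [Finset.sum_const, smul_eq_mul, mul_comm]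
      calc 3 * A.card = ∑ _a ∈ A, 3 := by rw [Finset.sum_const, smul_eq_mul, mul_comm]
        _ ≤ ∑ a ∈ A, a.card := Finset.sum_le_sum hbig3
        _ = 2 * X.card := h2x
    -- pick one point from each unmatched set
    have hUne : ∀ u ∈ U, ∃ z, z ∈ u := by
      intro u hu
      obtain ⟨z, hz⟩ : u.Nonempty := Finset.card_pos.1
        (by have := hbig3 u (Finset.mem_sdiff.1 hu).1; omega)
      exact ⟨z, hz⟩
    set g : {u // u ∈ U} → α := fun u => (hUne u.1 u.2).choose with hg
    have hgspec : ∀ (u : {u // u ∈ U}), g u ∈ u.1 := fun u => (hUne u.1 u.2).choose_spec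
    set HU := Finset.image g U.attach with hHU
    have hHUcard : HU.card ≤ U.card := by
      rw [hHU]
      exact (Finset.card_image_le).trans (le_of_eq (Finset.card_attach))
    refine ⟨Z ∪ HU, ?_, ?_, ?_⟩
    · refine Finset.union_subset hZX ?_
      intro z hz
      obtain ⟨u, _, hgu⟩ := Finset.mem_image.1 hz
      exact (h1 u.1 (Finset.mem_sdiff.1 u.2).1).1 (hgu ▸ hgspec u)
    · intro a ha
      by_cases has : a ∈ supp
      · obtain ⟨P, hP, haP⟩ := Finset.mem_sup.1 has
        refine ⟨f ⟨P, hP⟩, Finset.mem_inter.2 ⟨(hfspec ⟨P, hP⟩).2 a haP, ?_⟩⟩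
        exact Finset.mem_union.2 (Or.inl (Finset.mem_image.2 ⟨⟨P, hP⟩,
          Finset.mem_attach _ _, rfl⟩))
      · have haU : a ∈ U := Finset.mem_sdiff.2 ⟨ha, has⟩
        refine ⟨g ⟨a, haU⟩, Finset.mem_inter.2 ⟨hgspec ⟨a, haU⟩, ?_⟩⟩
        exact Finset.mem_union.2 (Or.inr (Finset.mem_image.2 ⟨⟨a, haU⟩,
          Finset.mem_attach _ _, rfl⟩))
    · have hHle : (Z ∪ HU).card ≤ M.card + U.card := by
        calc (Z ∪ HU).card ≤ Z.card + HU.card := Finset.card_union_le _ _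
          _ ≤ M.card + U.card := by omega
      omega

/-- The mixed bound: for degree-≤2 families there is H with small H plus small packings. -/
theorem mixed_bound (N : ℕ) : ∀ (X : Finset α) (A : Finset (Finset α)),
    X.card ≤ N →
    (∀ a ∈ A, a ⊆ X ∧ 2 ≤ a.card) →
    (∀ z ∈ X, dA A z ≤ 2) →
    ∃ H, H ⊆ X ∧ ∀ D ⊆ A, (∀ a ∈ D, a ⊆ X \ H) →
      ((D : Set (Finset α)).Pairwise Disjoint) →
      2 * (H.card + ∑ a ∈ D, (a.card - 1)) ≤ X.card := by
  induction N with
  | zero =>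
    intro X A hcard h1 _
    have hXe : X = ∅ := Finset.card_eq_zero.1 (Nat.le_zero.1 hcard)
    subst hXe
    refine ⟨∅, Finset.empty_subset _, fun D hD hDsub _ => ?_⟩
    have hDe : D = ∅ := by
      refine Finset.eq_empty_iff_forall_notMem.2 fun a ha => ?_
      have h2a := (h1 a (hD ha)).2
      have := hDsub a ha
      rw [Finset.empty_sdiff, Finset.subset_empty] at this
      rw [this] at h2a
      simp at h2a
    subst hDe
    simp
  | succ n ih =>
    intro X A hcard h1 hdeg2
    by_cases hM1 : ∀ a ∈ A, a.card ≤ 2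
    · -- all pairs
      refine ⟨∅, Finset.empty_subset _, fun D hD hDsub hPD => ?_⟩
      have hD2 : ∀ a ∈ D, a.card = 2 := by
        intro a ha
        have := (h1 a (hD ha)).2
        have := hM1 a (hD ha)
        omega
      have hDdisj : ∀ x ∈ D, ∀ y ∈ D, x ≠ y → Disjoint (id x) (id y) := by
        intro x hx y hy hxy
        exact hPD (Finset.mem_coe.2 hx) (Finset.mem_coe.2 hy) hxy
      have hsum : ∑ a ∈ D, (a.card - 1) = D.card := by
        rw [Finset.sum_congr rfl (fun a ha => by rw [hD2 a ha])]
        simp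
      have hcov : 2 * D.card ≤ X.card := by
        have h1' : (D.biUnion id).card = ∑ a ∈ D, (id a).card :=
          Finset.card_biUnion hDdisj
        have h2' : ∑ a ∈ D, (id a).card = 2 * D.card := by
          have heq : ∀ a ∈ D, (id a).card = 2 := fun a ha => hD2 a ha
          rw [Finset.sum_congr rfl heq, Finset.sum_const, smul_eq_mul, mul_comm]
        have h3' : D.biUnion id ⊆ X := by
          intro q hq
          obtain ⟨a, ha, hqa⟩ := Finset.mem_biUnion.1 hq
          exact (h1 a (hD ha)).1 hqa
        calc 2 * D.card = (D.biUnion id).card := by rw [h1', h2']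
          _ ≤ X.card := Finset.card_le_card h3'
      rw [hsum]
      simpa using hcov
    by_cases hM2 : ∃ z ∈ X, dA A z = 0
    · obtain ⟨z, hz, hd0⟩ := hM2
      have hfe : A.filter (fun t => z ∈ t) = ∅ := Finset.card_eq_zero.1 hd0
      have hnotin : ∀ a ∈ A, z ∉ a := by
        intro a ha hq
        have hmem : a ∈ A.filter (fun t => z ∈ t) := Finset.mem_filter.2 ⟨ha, hq⟩
        rw [hfe] at hmem
        exact absurd hmem (Finset.notMem_empty a)
      have hAX' : ∀ a ∈ A, a ⊆ X.erase z := by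
        intro a ha q hq
        exact Finset.mem_erase.2 ⟨fun h => hnotin a ha (h ▸ hq), (h1 a ha).1 hq⟩
      obtain ⟨H, hHsub, hHbd⟩ := ih (X.erase z) A
        (by rw [Finset.card_erase_of_mem hz]; have : 1 ≤ X.card := Finset.card_pos.2 ⟨z, hz⟩; omega)
        (fun a ha => ⟨hAX' a ha, (h1 a ha).2⟩)
        (fun w hw => hdeg2 w (Finset.mem_of_mem_erase hw))
      refine ⟨H, hHsub.trans (Finset.erase_subset _ _), fun D hD hDsub hPD => ?_⟩
      have hbd := hHbd D hD (fun a ha => ?_) hPD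
      · refine hbd.trans (Finset.card_le_card (Finset.erase_subset _ _))
      · intro q hq
        refine Finset.mem_sdiff.2 ⟨Finset.mem_erase.2
          ⟨fun h => hnotin a (hD ha) (h ▸ hq), ?_⟩, ?_⟩
        · exact (Finset.mem_sdiff.1 (hDsub a ha hq)).1
        · exact (Finset.mem_sdiff.1 (hDsub a ha hq)).2
    by_cases hM3 : ∃ z ∈ X, dA A z = 1
    · obtain ⟨z, hz, hd1⟩ := hM3
      obtain ⟨s, hs_eq⟩ := Finset.card_eq_one.1 hd1
      have hsA : s ∈ A ∧ z ∈ s := by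
        have : s ∈ A.filter (fun t => z ∈ t) := by rw [hs_eq]; simp
        exact Finset.mem_filter.1 this
      have hz_only : ∀ t ∈ A, z ∈ t → t = s := by
        intro t ht hzt
        have : t ∈ A.filter (fun t => z ∈ t) := Finset.mem_filter.2 ⟨ht, hzt⟩
        rw [hs_eq] at this; simpa using this
      obtain ⟨y, hy⟩ : (s.erase z).Nonempty := by
        rw [← Finset.card_pos, Finset.card_erase_of_mem hsA.2]
        have := (h1 s hsA.1).2; omega
      have hyz : y ≠ z := (Finset.mem_erase.1 hy).1
      have hys : y ∈ s := (Finset.mem_erase.1 hy).2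
      have hyX : y ∈ X := (h1 s hsA.1).1 hys
      set X' := (X.erase z).erase y with hX'def
      have hX'sub : X' ⊆ X := (Finset.erase_subset _ _).trans (Finset.erase_subset _ _)
      set A' := A.filter (fun a => a ⊆ X') with hA'def
      have hcard2 : X.card = X'.card + 2 := by
        rw [hX'def, Finset.card_erase_of_mem (Finset.mem_erase.2 ⟨hyz, hyX⟩),
          Finset.card_erase_of_mem hz]
        have h2c : 2 ≤ X.card := Finset.one_lt_card.2 ⟨y, hyX, z, hz, hyz⟩
        omega
      obtain ⟨H, hHsub, hHbd⟩ := ih X' A'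
        (by omega)
        (fun a ha => ⟨(Finset.mem_filter.1 ha).2, (h1 a (Finset.mem_filter.1 ha).1).2⟩)
        (fun w hw => (Finset.card_le_card
          (Finset.monotone_filter_left _ (Finset.filter_subset _ _))).trans
          (hdeg2 w (hX'sub hw)))
      refine ⟨insert y H, ?_, fun D hD hDsub hPD => ?_⟩
      · intro q hq
        rcases Finset.mem_insert.1 hq with h | h
        exacts [h ▸ hyX, hX'sub (hHsub h)]
      · have hDA' : ∀ a ∈ D, a ∈ A' ∧ a ⊆ X' \ H := by
          intro a ha
          have haA := hD ha
          have hay : y ∉ a := by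
            intro hya
            have := hDsub a ha hya
            exact (Finset.mem_sdiff.1 this).2 (Finset.mem_insert_self _ _)
          have haz : z ∉ a := by
            intro hza
            exact hay (hz_only a haA hza ▸ hys)
          have haX' : a ⊆ X' := by
            intro q hq
            refine Finset.mem_erase.2 ⟨fun h => hay (h ▸ hq),
              Finset.mem_erase.2 ⟨fun h => haz (h ▸ hq),
                (Finset.mem_sdiff.1 (hDsub a ha hq)).1⟩⟩
          refine ⟨Finset.mem_filter.2 ⟨haA, haX'⟩, fun q hq => Finset.mem_sdiff.2
            ⟨haX' hq, fun hqH => ?_⟩⟩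
          exact (Finset.mem_sdiff.1 (hDsub a ha hq)).2 (Finset.mem_insert_of_mem hqH)
        have hbd := hHbd D (fun a ha => (hDA' a ha).1) (fun a ha => (hDA' a ha).2) hPD
        have := Finset.card_insert_le y H
        omega
    by_cases hM4 : ∃ C, C ⊆ X ∧ IsClosed' A C ∧ C.Nonempty ∧ C ≠ X
    · obtain ⟨C, hCX, hCcl, hCne, hCne'⟩ := hM4
      have hsplit : ∀ a ∈ A, a ⊆ C ∨ a ⊆ X \ C := by
        intro a ha
        by_cases h : (a ∩ C).Nonempty
        · exact Or.inl (hCcl a ha h)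
        · refine Or.inr fun q hq => Finset.mem_sdiff.2 ⟨(h1 a ha).1 hq, fun hqC => ?_⟩
          exact h ⟨q, Finset.mem_inter.2 ⟨hq, hqC⟩⟩
      have hCcard : C.card < X.card :=
        Finset.card_lt_card (Finset.ssubset_iff_subset_ne.2 ⟨hCX, hCne'⟩)
      have hCpos : 0 < C.card := Finset.card_pos.2 hCne
      have hXCcard : (X \ C).card = X.card - C.card := Finset.card_sdiff_of_subset hCX
      obtain ⟨H₁, hH₁sub, hH₁bd⟩ := ih C (A.filter (fun a => a ⊆ C))
        (by omega)
        (fun a ha => ⟨(Finset.mem_filter.1 ha).2, (h1 a (Finset.mem_filter.1 ha).1).2⟩)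
        (fun w hw => (Finset.card_le_card
          (Finset.monotone_filter_left _ (Finset.filter_subset _ _))).trans
          (hdeg2 w (hCX hw)))
      obtain ⟨H₂, hH₂sub, hH₂bd⟩ := ih (X \ C) (A.filter (fun a => a ⊆ X \ C))
        (by omega)
        (fun a ha => ⟨(Finset.mem_filter.1 ha).2, (h1 a (Finset.mem_filter.1 ha).1).2⟩)
        (fun w hw => (Finset.card_le_card
          (Finset.monotone_filter_left _ (Finset.filter_subset _ _))).trans
          (hdeg2 w (Finset.sdiff_subset hw)))
      refine ⟨H₁ ∪ H₂, Finset.union_subset (hH₁sub.trans hCX)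
        (hH₂sub.trans Finset.sdiff_subset), fun D hD hDsub hPD => ?_⟩
      set D₁ := D.filter (fun a => a ⊆ C) with hD₁
      set D₂ := D.filter (fun a => ¬ a ⊆ C) with hD₂
      have hDunion : D = D₁ ∪ D₂ := (Finset.filter_union_filter_not_eq _ D).symm
      have hDdisj : Disjoint D₁ D₂ := Finset.disjoint_filter_filter_not D D _
      have hsum : ∑ a ∈ D, (a.card - 1) =
          ∑ a ∈ D₁, (a.card - 1) + ∑ a ∈ D₂, (a.card - 1) := by
        rw [hDunion, Finset.sum_union hDdisj]
      have hb₁ := hH₁bd D₁ (fun a ha => Finset.mem_filter.2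
          ⟨hD (Finset.mem_of_mem_filter a ha), (Finset.mem_filter.1 ha).2⟩)
        (fun a ha q hq => Finset.mem_sdiff.2 ⟨(Finset.mem_filter.1 ha).2 hq, fun hqH => ?_⟩)
        (hPD.mono (by rw [hDunion]; exact Finset.coe_subset.2 Finset.subset_union_left))
      · have hb₂ := hH₂bd D₂ (fun a ha => ?_)
          (fun a ha q hq => ?_)
          (hPD.mono (by rw [hDunion]; exact Finset.coe_subset.2 Finset.subset_union_right))
        · have hcu := Finset.card_union_le H₁ H₂
          rw [hsum]
          omega
        · -- D₂ ⊆ A.filter (⊆ X \ C)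
          have haA := hD (Finset.mem_of_mem_filter a ha)
          refine Finset.mem_filter.2 ⟨haA, ?_⟩
          rcases hsplit a haA with h | h
          · exact absurd h (Finset.mem_filter.1 ha).2
          · exact h
        · -- membership in (X \ C) \ H₂
          have haA := hD (Finset.mem_of_mem_filter a ha)
          have haXC : a ⊆ X \ C := by
            rcases hsplit a haA with h | h
            · exact absurd h (Finset.mem_filter.1 ha).2
            · exact h
          refine Finset.mem_sdiff.2 ⟨haXC hq, fun hqH => ?_⟩
          exact (Finset.mem_sdiff.1 (hDsub a (Finset.mem_of_mem_filter a ha) hq)).2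
            (Finset.mem_union.2 (Or.inr hqH))
      · -- q ∉ H₁ for D₁ sets
        exact (Finset.mem_sdiff.1 (hDsub a (Finset.mem_of_mem_filter a ha) hq)).2
          (Finset.mem_union.2 (Or.inl hqH))
    · -- final case: apply the cover theorem
      have hdegX : ∀ z ∈ X, dA A z = 2 := by
        intro z hz
        rcases Nat.lt_or_ge (dA A z) 2 with h | h
        · interval_cases hd : dA A z
          · exact absurd ⟨z, hz, hd⟩ hM2
          · exact absurd ⟨z, hz, hd⟩ hM3
        · exact le_antisymm (hdeg2 z hz) h
      obtain ⟨abig, habig, habigc⟩ : ∃ a ∈ A, 3 ≤ a.card := by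
        push_neg at hM1
        obtain ⟨a, ha, hac⟩ := hM1
        exact ⟨a, ha, by omega⟩
      have hconn : ∀ z ∈ X, conn X A z = X := by
        intro z hz
        by_contra hne
        exact hM4 ⟨conn X A z, conn_subset _ _ _, conn_closed (fun a ha => (h1 a ha).1),
          ⟨z, mem_conn_self _ hz⟩, hne⟩
      have h4 : CompCond X A ∅ := by
        intro z hz
        refine Or.inr (Or.inl ⟨abig, habig, ?_, habigc⟩)
        rw [hconn z hz]
        exact (h1 abig habig).1
      obtain ⟨H, hHsub, hHcov, hHcard⟩ := cover_exists X.card X A ∅ (le_refl _) h1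
        (fun z _ hz => absurd hz (Finset.notMem_empty z))
        (fun z hz _ => hdegX z hz) h4
      refine ⟨H, hHsub, fun D hD hDsub _ => ?_⟩
      have hDe : D = ∅ := by
        refine Finset.eq_empty_iff_forall_notMem.2 fun a ha => ?_
        obtain ⟨q, hq⟩ := hHcov a (hD ha)
        obtain ⟨hq1, hq2⟩ := Finset.mem_inter.1 hq
        exact (Finset.mem_sdiff.1 (hDsub a ha hq1)).2 hq2
      subst hDe
      simpa using hHcard

/-- A family `G` of nonempty subsets of `[n]` is an `(n,k)`-generator if every nonempty
subset of `[n]` is a disjoint union of at most `k` members of `G`. -/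
def IsGenerator (n k : ℕ) (G : Finset (Finset (Fin n))) : Prop :=
  (∀ g ∈ G, g.Nonempty) ∧
  ∀ X : Finset (Fin n), X.Nonempty →
    ∃ S : Finset (Finset (Fin n)), S ⊆ G ∧ S.card ≤ k ∧
      (S : Set (Finset (Fin n))).Pairwise Disjoint ∧ X = S.sup id

section Generator

variable {n k : ℕ} {G : Finset (Finset (Fin n))}

lemma gen_partition (hG : IsGenerator n k G) (Y : Finset (Fin n)) (hY : Y.Nonempty) :
    ∃ S : Finset (Finset (Fin n)), S ⊆ G ∧ S.card ≤ k ∧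
      (∀ s ∈ S, s ⊆ Y) ∧ (S : Set (Finset (Fin n))).Pairwise Disjoint ∧
      Y.card = ∑ s ∈ S, s.card := by
  obtain ⟨S, hSG, hSk, hSdisj, hSsup⟩ := hG.2 Y hY
  have hdisj : ∀ s ∈ S, ∀ t ∈ S, s ≠ t → Disjoint (id s) (id t) :=
    fun s hs t ht hst => hSdisj (Finset.mem_coe.2 hs) (Finset.mem_coe.2 ht) hst
  refine ⟨S, hSG, hSk, ?_, hSdisj, ?_⟩
  · intro s hs
    have : id s ≤ S.sup id := Finset.le_sup hs
    rw [← hSsup] at this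
    exact this
  · rw [hSsup, Finset.sup_eq_biUnion, Finset.card_biUnion hdisj]
    rfl

lemma gen_singleton (hG : IsGenerator n k G) (x : Fin n) : ({x} : Finset (Fin n)) ∈ G := by
  obtain ⟨S, hSG, _, hSsub, _, _⟩ := gen_partition hG {x} ⟨x, Finset.mem_singleton_self x⟩
  obtain ⟨S', hS'G, _, _, hS'sup⟩ := hG.2 {x} ⟨x, Finset.mem_singleton_self x⟩
  have hS'ne : S'.Nonempty := by
    rw [Finset.nonempty_iff_ne_empty]
    rintro rfl
    simp at hS'sup
  obtain ⟨s, hs⟩ := hS'ne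
  have hssub : s ⊆ {x} := by
    have : id s ≤ S'.sup id := Finset.le_sup hs
    rw [← hS'sup] at this
    exact this
  have hsne : s.Nonempty := hG.1 s (hS'G hs)
  have : s = {x} := by
    obtain ⟨y, hy⟩ := hsne
    have hyx : y = x := Finset.mem_singleton.1 (hssub hy)
    apply Finset.Subset.antisymm hssub
    intro q hq
    rw [Finset.mem_singleton.1 hq, ← hyx]
    exact hy
  exact this ▸ hS'G hs

/-- count of size ≥ 3 members inside X -/
lemma gen_cnt3 (hG : IsGenerator n k G) :
    ∀ (m : ℕ) (X : Finset (Fin n)), X.card ≤ m →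
      X.card ≤ ((G.filter (fun g => 3 ≤ g.card)).filter (fun g => g ⊆ X)).card + 2 * k := by
  intro m
  induction m with
  | zero => intro X hX; omega
  | succ m ih =>
    intro X hX
    by_cases hsmall : X.card ≤ 2 * k
    · omega
    have hXne : X.Nonempty := Finset.card_pos.1 (by omega)
    obtain ⟨S, hSG, hSk, hSsub, hSdisj, hSsum⟩ := gen_partition hG X hXne
    have hbig : ∃ h ∈ S, 3 ≤ h.card := by
      by_contra hc
      push_neg at hc
      have : ∑ s ∈ S, s.card ≤ ∑ _s ∈ S, 2 :=
        Finset.sum_le_sum (fun s hs => by have := hc s hs; omega)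
      rw [Finset.sum_const, smul_eq_mul] at this
      omega
    obtain ⟨h, hhS, hhc⟩ := hbig
    obtain ⟨z, hz⟩ : h.Nonempty := Finset.card_pos.1 (by omega)
    have hzX : z ∈ X := hSsub h hhS hz
    have hstep : (((G.filter (fun g => 3 ≤ g.card)).filter (fun g => g ⊆ X.erase z)).card + 1)
        ≤ ((G.filter (fun g => 3 ≤ g.card)).filter (fun g => g ⊆ X)).card := by
      have hhmem : h ∈ (G.filter (fun g => 3 ≤ g.card)).filter (fun g => g ⊆ X) :=
        Finset.mem_filter.2 ⟨Finset.mem_filter.2 ⟨hSG hhS, hhc⟩, hSsub h hhS⟩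
      have hhnot : h ∉ (G.filter (fun g => 3 ≤ g.card)).filter (fun g => g ⊆ X.erase z) := by
        intro hmem
        exact (Finset.mem_erase.1 ((Finset.mem_filter.1 hmem).2 hz)).1 rfl
      have hsub : insert h ((G.filter (fun g => 3 ≤ g.card)).filter (fun g => g ⊆ X.erase z))
          ⊆ (G.filter (fun g => 3 ≤ g.card)).filter (fun g => g ⊆ X) := by
        intro t ht
        rcases Finset.mem_insert.1 ht with h' | h'
        · exact h' ▸ hhmem
        · obtain ⟨ht1, ht2⟩ := Finset.mem_filter.1 h'
          exact Finset.mem_filter.2 ⟨ht1, ht2.trans (Finset.erase_subset _ _)⟩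
      calc _ = (insert h ((G.filter (fun g => 3 ≤ g.card)).filter
            (fun g => g ⊆ X.erase z))).card := (Finset.card_insert_of_notMem hhnot).symm
        _ ≤ _ := Finset.card_le_card hsub
    have hec : (X.erase z).card = X.card - 1 := Finset.card_erase_of_mem hzX
    have := ih (X.erase z) (by omega)
    omega

/-- count of size ≥ 2 members inside X : weak bound -/
lemma gen_cnt2w (hG : IsGenerator n k G) :
    ∀ (m : ℕ) (X : Finset (Fin n)), X.card ≤ m →
      X.card ≤ ((G.filter (fun g => 2 ≤ g.card)).filter (fun g => g ⊆ X)).card + k := by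
  intro m
  induction m with
  | zero => intro X hX; omega
  | succ m ih =>
    intro X hX
    by_cases hsmall : X.card ≤ k
    · omega
    have hXne : X.Nonempty := Finset.card_pos.1 (by omega)
    obtain ⟨S, hSG, hSk, hSsub, hSdisj, hSsum⟩ := gen_partition hG X hXne
    have hbig : ∃ h ∈ S, 2 ≤ h.card := by
      by_contra hc
      push_neg at hc
      have : ∑ s ∈ S, s.card ≤ ∑ _s ∈ S, 1 :=
        Finset.sum_le_sum (fun s hs => by have := hc s hs; omega)
      rw [Finset.sum_const, smul_eq_mul] at this
      omega
    obtain ⟨h, hhS, hhc⟩ := hbig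
    obtain ⟨z, hz⟩ : h.Nonempty := Finset.card_pos.1 (by omega)
    have hzX : z ∈ X := hSsub h hhS hz
    have hstep : (((G.filter (fun g => 2 ≤ g.card)).filter (fun g => g ⊆ X.erase z)).card + 1)
        ≤ ((G.filter (fun g => 2 ≤ g.card)).filter (fun g => g ⊆ X)).card := by
      have hhmem : h ∈ (G.filter (fun g => 2 ≤ g.card)).filter (fun g => g ⊆ X) :=
        Finset.mem_filter.2 ⟨Finset.mem_filter.2 ⟨hSG hhS, hhc⟩, hSsub h hhS⟩
      have hhnot : h ∉ (G.filter (fun g => 2 ≤ g.card)).filter (fun g => g ⊆ X.erase z) := by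
        intro hmem
        exact (Finset.mem_erase.1 ((Finset.mem_filter.1 hmem).2 hz)).1 rfl
      have hsub : insert h ((G.filter (fun g => 2 ≤ g.card)).filter (fun g => g ⊆ X.erase z))
          ⊆ (G.filter (fun g => 2 ≤ g.card)).filter (fun g => g ⊆ X) := by
        intro t ht
        rcases Finset.mem_insert.1 ht with h' | h'
        · exact h' ▸ hhmem
        · obtain ⟨ht1, ht2⟩ := Finset.mem_filter.1 h'
          exact Finset.mem_filter.2 ⟨ht1, ht2.trans (Finset.erase_subset _ _)⟩
      calc _ = (insert h ((G.filter (fun g => 2 ≤ g.card)).filter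
            (fun g => g ⊆ X.erase z))).card := (Finset.card_insert_of_notMem hhnot).symm
        _ ≤ _ := Finset.card_le_card hsub
    have hec : (X.erase z).card = X.card - 1 := Finset.card_erase_of_mem hzX
    have := ih (X.erase z) (by omega)
    omega

/-- the key degree lemma : if X is large, some point lies in ≥ 3 members inside X -/
lemma gen_L3 (hG : IsGenerator n k G) (X : Finset (Fin n)) (hX : 2 * k + 1 ≤ X.card) :
    ∃ z ∈ X, 3 ≤ ((G.filter (fun g => 2 ≤ g.card)).filter
      (fun a => a ⊆ X ∧ z ∈ a)).card := by
  by_contra hc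
  push_neg at hc
  set B := (G.filter (fun g => 2 ≤ g.card)).filter (fun a => a ⊆ X) with hB
  have hBprop : ∀ a ∈ B, a ⊆ X ∧ 2 ≤ a.card := by
    intro a ha
    obtain ⟨ha1, ha2⟩ := Finset.mem_filter.1 ha
    exact ⟨ha2, (Finset.mem_filter.1 ha1).2⟩
  have hBdeg : ∀ z ∈ X, dA B z ≤ 2 := by
    intro z hz
    have heq : B.filter (fun a => z ∈ a) =
        (G.filter (fun g => 2 ≤ g.card)).filter (fun a => a ⊆ X ∧ z ∈ a) := by
      rw [hB, Finset.filter_filter]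
    have := hc z hz
    unfold dA
    rw [heq]
    omega
  obtain ⟨H, hHsub, hbd⟩ := mixed_bound X.card X B (le_refl _) hBprop hBdeg
  have hHcard : 2 * H.card ≤ X.card := by
    have := hbd ∅ (Finset.empty_subset _) (fun a ha => absurd ha (Finset.notMem_empty a))
      (by simp)
    simpa using this
  have hHle : H.card ≤ X.card := Finset.card_le_card hHsub
  have hYcard : (X \ H).card = X.card - H.card := Finset.card_sdiff_of_subset hHsub
  have hYne : (X \ H).Nonempty := Finset.card_pos.1 (by omega)
  obtain ⟨S, hSG, hSk, hSsub, hSdisj, hSsum⟩ := gen_partition hG (X \ H) hYne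
  set D := S.filter (fun s => 2 ≤ s.card) with hD
  have hDB : D ⊆ B := by
    intro s hs
    obtain ⟨hs1, hs2⟩ := Finset.mem_filter.1 hs
    refine Finset.mem_filter.2 ⟨Finset.mem_filter.2 ⟨hSG hs1, hs2⟩, ?_⟩
    exact (hSsub s hs1).trans Finset.sdiff_subset
  have hDX : ∀ a ∈ D, a ⊆ X \ H := fun a ha => hSsub a (Finset.mem_of_mem_filter a ha)
  have hDP : ((D : Set (Finset (Fin n)))).Pairwise Disjoint :=
    hSdisj.mono (Finset.coe_subset.2 (Finset.filter_subset _ _))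
  have hbd2 := hbd D hDB hDX hDP
  -- |Y| = W + |S|
  have hsum2 : (X \ H).card = (∑ a ∈ D, (a.card - 1)) + S.card := by
    rw [hSsum]
    have hsplit : S = D ∪ S.filter (fun s => ¬ 2 ≤ s.card) := by
      rw [hD, Finset.filter_union_filter_not_eq]
    have hdisj : Disjoint D (S.filter (fun s => ¬ 2 ≤ s.card)) :=
      Finset.disjoint_filter_filter_not S S _
    rw [hsplit, Finset.sum_union hdisj, Finset.card_union_of_disjoint hdisj]
    have h1s : ∀ s ∈ S.filter (fun s => ¬ 2 ≤ s.card), s.card = 1 := by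
      intro s hs
      obtain ⟨hs1, hs2⟩ := Finset.mem_filter.1 hs
      have hne := hG.1 s (hSG hs1)
      have := Finset.card_pos.2 hne
      omega
    have h2s : ∀ s ∈ D, s.card = (s.card - 1) + 1 := by
      intro s hs
      have := (Finset.mem_filter.1 hs).2
      omega
    rw [Finset.sum_congr rfl h2s, Finset.sum_add_distrib, Finset.sum_const, smul_eq_mul,
      mul_one, Finset.sum_congr rfl h1s, Finset.sum_const, smul_eq_mul, mul_one]
    omega
  omega

/-- the main counting bound -/
lemma gen_cnt2 (hG : IsGenerator n k G) :
    ∀ (m : ℕ) (X : Finset (Fin n)), X.card ≤ m →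
      3 * X.card ≤ ((G.filter (fun g => 2 ≤ g.card)).filter (fun g => g ⊆ X)).card + 5 * k := by
  intro m
  induction m with
  | zero => intro X hX; omega
  | succ m ih =>
    intro X hX
    by_cases hsmall : X.card ≤ 2 * k
    · have := gen_cnt2w hG X.card X (le_refl _)
      omega
    obtain ⟨z, hzX, hz3⟩ := gen_L3 hG X (by omega)
    set M2 := G.filter (fun g => 2 ≤ g.card) with hM2
    have hstep : (M2.filter (fun g => g ⊆ X.erase z)).card + 3 ≤
        (M2.filter (fun g => g ⊆ X)).card := by
      have hun : (M2.filter (fun g => g ⊆ X.erase z)) ∪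
          (M2.filter (fun a => a ⊆ X ∧ z ∈ a)) ⊆ M2.filter (fun g => g ⊆ X) := by
        intro t ht
        rcases Finset.mem_union.1 ht with h | h
        · obtain ⟨h1', h2'⟩ := Finset.mem_filter.1 h
          exact Finset.mem_filter.2 ⟨h1', h2'.trans (Finset.erase_subset _ _)⟩
        · obtain ⟨h1', h2'⟩ := Finset.mem_filter.1 h
          exact Finset.mem_filter.2 ⟨h1', h2'.1⟩
      have hdisj : Disjoint (M2.filter (fun g => g ⊆ X.erase z))
          (M2.filter (fun a => a ⊆ X ∧ z ∈ a)) := by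
        rw [Finset.disjoint_left]
        intro t ht1 ht2
        exact (Finset.mem_erase.1 ((Finset.mem_filter.1 ht1).2
          (Finset.mem_filter.1 ht2).2.2)).1 rfl
      calc (M2.filter (fun g => g ⊆ X.erase z)).card + 3
          ≤ (M2.filter (fun g => g ⊆ X.erase z)).card +
            (M2.filter (fun a => a ⊆ X ∧ z ∈ a)).card := by omega
        _ = ((M2.filter (fun g => g ⊆ X.erase z)) ∪
            (M2.filter (fun a => a ⊆ X ∧ z ∈ a))).card :=
          (Finset.card_union_of_disjoint hdisj).symm
        _ ≤ _ := Finset.card_le_card hun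
    have hec : (X.erase z).card = X.card - 1 := Finset.card_erase_of_mem hzX
    have := ih (X.erase z) (by omega)
    omega

end Generator

theorem stmt14 (n k : ℕ) (h1 : 2 * k < n) (h2 : n ≤ 3 * k)
    (G : Finset (Finset (Fin n))) (hG : IsGenerator n k G) :
    n - 2 * k ≤ (G.filter fun g => 3 ≤ g.card).card ∧
    (n - 2 * k) + ((3 * k - n) + (n - 2 * k) * 3) ≤
      (G.filter fun g => 2 ≤ g.card).card ∧
    (3 * k - n) * 3 + (n - 2 * k) * 7 ≤ G.card := by
  have huniv : (Finset.univ : Finset (Fin n)).card = n := by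
    rw [Finset.card_univ, Fintype.card_fin]
  have hfilter3 : (G.filter (fun g => 3 ≤ g.card)).filter
      (fun g => g ⊆ (Finset.univ : Finset (Fin n))) = G.filter (fun g => 3 ≤ g.card) :=
    Finset.filter_true_of_mem (fun g _ => Finset.subset_univ g)
  have hfilter2 : (G.filter (fun g => 2 ≤ g.card)).filter
      (fun g => g ⊆ (Finset.univ : Finset (Fin n))) = G.filter (fun g => 2 ≤ g.card) :=
    Finset.filter_true_of_mem (fun g _ => Finset.subset_univ g)
  have hc3 := gen_cnt3 hG n Finset.univ (le_of_eq huniv)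
  have hc2 := gen_cnt2 hG n Finset.univ (le_of_eq huniv)
  rw [hfilter3, huniv] at hc3
  rw [hfilter2, huniv] at hc2
  -- G contains all singletons plus the size ≥ 2 members
  have hGcard : n + (G.filter (fun g => 2 ≤ g.card)).card ≤ G.card := by
    set S1 := (Finset.univ : Finset (Fin n)).image (fun x => ({x} : Finset (Fin n))) with hS1
    have hS1card : S1.card = n := by
      rw [hS1, Finset.card_image_of_injective _ (fun x y h => by
        simpa using h), huniv]
    have hS1sub : S1 ⊆ G := by
      intro s hs
      obtain ⟨x, _, hx⟩ := Finset.mem_image.1 hs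
      exact hx ▸ gen_singleton hG x
    have hdisj : Disjoint S1 (G.filter (fun g => 2 ≤ g.card)) := by
      rw [Finset.disjoint_left]
      intro s hs1 hs2
      obtain ⟨x, _, hx⟩ := Finset.mem_image.1 hs1
      have := (Finset.mem_filter.1 hs2).2
      rw [← hx] at this
      simp at this
    have hsub : S1 ∪ G.filter (fun g => 2 ≤ g.card) ⊆ G :=
      Finset.union_subset hS1sub (Finset.filter_subset _ _)
    calc n + (G.filter (fun g => 2 ≤ g.card)).card
        = (S1 ∪ G.filter (fun g => 2 ≤ g.card)).card := by
          rw [Finset.card_union_of_disjoint hdisj, hS1card]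
      _ ≤ G.card := Finset.card_le_card hsub
  refine ⟨by omega, by omega, by omega⟩
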